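/- arXiv:1310.3600 — 3 statements merged into one kernel-verified Lean document; each statement's English description precedes it below -/
import Mathlib

section
/- Erdős–Rado canonical theorem: For every n ∈ ω and every function c : [ω]^n → R into an arbitrary set R, there exists an infinite set X ⊆ ω and a set I ⊆ {0,...,n-1} such that for all A, B ∈ [X]^n, c(A) = c(B) if and only if A and B agree on the positions indexed by I (i.e., the i-th elements of the increasing enumerations of A and B coincide for all i ∈ I). -/
namespace ErdosRado

theorem inf_ramsey {κ : Type} [Finite κ] :
    ∀ (k : ℕ) (χ : Finset ℕ → κ) (Y : Set ℕ), Y.Infinite →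
    ∃ X : Set ℕ, X ⊆ Y ∧ X.Infinite ∧ ∃ p₀ : κ, ∀ s : Finset ℕ, ↑s ⊆ X → s.card = k → χ s = p₀ := by
  intro k
  induction k with
  | zero =>
    intro χ Y hY
    refine ⟨Y, le_refl _, hY, χ ∅, fun s _ hs => ?_⟩
    rw [Finset.card_eq_zero] at hs; rw [hs]
  | succ k ih =>
    intro χ Y hY
    have hstep : ∀ Z : Set ℕ, Z.Infinite → ∃ (W : Set ℕ) (p : κ),
        W ⊆ Z ∧ W.Infinite ∧ (∀ w ∈ W, sInf Z < w) ∧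
        ∀ s : Finset ℕ, ↑s ⊆ W → s.card = k → χ (insert (sInf Z) s) = p := by
      intro Z hZ
      have h1 : (Z ∩ Set.Ioi (sInf Z)).Infinite := by
        have he : Z \ Set.Iic (sInf Z) = Z ∩ Set.Ioi (sInf Z) := by
          ext x; simp [Set.mem_diff, not_le, Set.mem_Ioi]
        rw [← he]; exact hZ.diff (Set.finite_Iic _)
      obtain ⟨W, hWsub, hWinf, p, hp⟩ := ih (fun s => χ (insert (sInf Z) s)) _ h1
      exact ⟨W, p, hWsub.trans Set.inter_subset_left, hWinf,
        fun w hw => (hWsub hw).2, hp⟩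
    choose stepW stepP hsub hinf hgt hhom using hstep
    let Zs : ℕ → {Z : Set ℕ // Z.Infinite} := fun j =>
      Nat.rec ⟨Y, hY⟩ (fun _ Z => ⟨stepW Z.1 Z.2, hinf Z.1 Z.2⟩) j
    have hZrec : ∀ j, (Zs (j+1)).1 = stepW (Zs j).1 (Zs j).2 := fun j => rfl
    let a : ℕ → ℕ := fun j => sInf (Zs j).1
    let p : ℕ → κ := fun j => stepP (Zs j).1 (Zs j).2
    have hamem : ∀ j, a j ∈ (Zs j).1 := fun j => Nat.sInf_mem (Zs j).2.nonempty
    have hZsub : ∀ j, (Zs (j+1)).1 ⊆ (Zs j).1 := fun j => by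
      rw [hZrec]; exact hsub _ _
    have hchain : ∀ j d, (Zs (j+d)).1 ⊆ (Zs j).1 := by
      intro j d; induction d with
      | zero => exact le_refl _
      | succ d hd => exact (hZsub (j+d)).trans hd
    have hchain' : ∀ j j', j ≤ j' → (Zs j').1 ⊆ (Zs j).1 := by
      intro j j' h
      obtain ⟨d, rfl⟩ := Nat.exists_eq_add_of_le h
      exact hchain j d
    have hgt' : ∀ j w, w ∈ (Zs (j+1)).1 → a j < w := fun j w hw => by
      have := hgt (Zs j).1 (Zs j).2 w (by rwa [← hZrec]); exact this
    have hamono : StrictMono a := by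
      apply strictMono_nat_of_lt_succ
      intro j
      exact hgt' j _ (hamem (j+1))
    have haY : ∀ j, a j ∈ Y := fun j => by
      have : (Zs j).1 ⊆ (Zs 0).1 := hchain' 0 j (Nat.zero_le _)
      exact this (hamem j)
    obtain ⟨b, hb⟩ := Finite.exists_infinite_fiber p
    have hJ : (p ⁻¹' {b}).Infinite := Set.infinite_coe_iff.mp hb
    refine ⟨a '' (p ⁻¹' {b}), ?_, hJ.image (hamono.injective.injOn), b, ?_⟩
    · rintro x ⟨j, _, rfl⟩; exact haY j
    · intro s hsX hcard
      have hne : s.Nonempty := by rw [← Finset.card_pos, hcard]; omega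
      set m := s.min' hne with hm
      have hmmem : m ∈ s := s.min'_mem hne
      obtain ⟨j₀, hj₀J, hj₀⟩ := hsX hmmem
      have hs' : ∀ x ∈ s.erase m, x ∈ (Zs (j₀+1)).1 := by
        intro x hx
        have hxs := Finset.mem_of_mem_erase hx
        obtain ⟨j', hj'J, hj'⟩ := hsX hxs
        have hxm : m < x := lt_of_le_of_ne (s.min'_le x hxs) (Ne.symm (Finset.ne_of_mem_erase hx))
        have : j₀ < j' := by
          by_contra hle
          push_neg at hle
          have := hamono.le_iff_le.mpr hle
          omega
        exact hchain' (j₀+1) j' this (hj' ▸ hamem j')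
      have hcard' : (s.erase m).card = k := by
        rw [Finset.card_erase_of_mem hmmem, hcard]; omega
      have := hhom (Zs j₀).1 (Zs j₀).2 (s.erase m) (by
        intro x hx
        rw [← hZrec]
        exact hs' x hx) hcard'
      have hins : insert (sInf (Zs j₀).1) (s.erase m) = s := by
        have : sInf (Zs j₀).1 = m := by rw [← hj₀]
        rw [this]
        exact Finset.insert_erase hmmem
      rw [hins] at this
      rw [this]
      have : p j₀ = b := hj₀J
      exact this


def img {n : ℕ} {γ : Type*} [DecidableEq γ] (f : Fin n → γ) : Finset γ :=
  Finset.image f Finset.univ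

theorem mem_img {n : ℕ} {γ : Type*} [DecidableEq γ] {f : Fin n → γ} {x : γ} :
    x ∈ img f ↔ ∃ p, f p = x := by
  simp [img]

theorem card_img {n : ℕ} {γ : Type*} [DecidableEq γ] {f : Fin n → γ}
    (hf : Function.Injective f) : (img f).card = n := by
  rw [img, Finset.card_image_of_injective _ hf, Finset.card_univ, Fintype.card_fin]

def pairIso {n : ℕ} {γ δ : Type*} [LinearOrder γ] [LinearOrder δ]
    (f g : Fin n → γ) (f' g' : Fin n → δ) : Prop :=
  ∀ p q, (f p < g q ↔ f' p < g' q) ∧ (f p = g q ↔ f' p = g' q)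

theorem pairIso_refl {n : ℕ} {γ : Type*} [LinearOrder γ] (f g : Fin n → γ) :
    pairIso f g f g := fun _ _ => ⟨Iff.rfl, Iff.rfl⟩

theorem pairIso.gt_iff {n : ℕ} {γ δ : Type*} [LinearOrder γ] [LinearOrder δ]
    {f g : Fin n → γ} {f' g' : Fin n → δ} (h : pairIso f g f' g') (p q : Fin n) :
    g q < f p ↔ g' q < f' p := by
  obtain ⟨h1, h2⟩ := h p q
  constructor
  · intro hlt
    rcases lt_trichotomy (f' p) (g' q) with hc | hc | hc
    · exact absurd (h1.mpr hc) (lt_asymm hlt)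
    · exact absurd (h2.mpr hc) (ne_of_gt hlt)
    · exact hc
  · intro hlt
    rcases lt_trichotomy (f p) (g q) with hc | hc | hc
    · exact absurd (h1.mp hc) (lt_asymm hlt)
    · exact absurd (h2.mp hc) (ne_of_gt hlt)
    · exact hc

theorem pairIso.symm {n : ℕ} {γ δ : Type*} [LinearOrder γ] [LinearOrder δ]
    {f g : Fin n → γ} {f' g' : Fin n → δ} (h : pairIso f g f' g') :
    pairIso g f g' f' := by
  intro p q
  refine ⟨h.gt_iff q p, ?_⟩
  rw [eq_comm, (h q p).2, eq_comm]

theorem pairIso.trans {n : ℕ} {γ δ ε : Type*} [LinearOrder γ] [LinearOrder δ] [LinearOrder ε]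
    {f g : Fin n → γ} {f' g' : Fin n → δ} {f'' g'' : Fin n → ε}
    (h : pairIso f g f' g') (h' : pairIso f' g' f'' g'') : pairIso f g f'' g'' :=
  fun p q => ⟨(h p q).1.trans ((h' p q).1), (h p q).2.trans ((h' p q).2)⟩

/-- rank of an element within a finset -/
def rk {γ : Type*} [LinearOrder γ] (T : Finset γ) (x : γ) : ℕ :=
  (T.filter (· < x)).card

theorem rk_enum {γ : Type*} [LinearOrder γ] (T : Finset γ) {k : ℕ} (hT : T.card = k)
    (j : Fin k) : rk T (T.orderEmbOfFin hT j) = j := by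
  have himg : T.filter (· < T.orderEmbOfFin hT j)
      = (Finset.univ.filter (fun j' : Fin k => j' < j)).image (T.orderEmbOfFin hT) := by
    ext y
    simp only [Finset.mem_filter, Finset.mem_image, Finset.mem_univ, true_and]
    constructor
    · rintro ⟨hyT, hylt⟩
      have : y ∈ Set.range (T.orderEmbOfFin hT) := by
        rw [Finset.range_orderEmbOfFin]; exact hyT
      obtain ⟨j', hj'⟩ := this
      refine ⟨j', ?_, hj'⟩
      have := (T.orderEmbOfFin hT).strictMono.lt_iff_lt (a := j') (b := j)
      rw [← this]
      rw [hj']; exact hylt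
    · rintro ⟨j', hj'lt, rfl⟩
      exact ⟨Finset.orderEmbOfFin_mem _ _ _, (T.orderEmbOfFin hT).strictMono hj'lt⟩
  rw [rk, himg, Finset.card_image_of_injective _ (T.orderEmbOfFin hT).injective]
  have : Finset.univ.filter (fun j' : Fin k => j' < j) = Finset.Iio j := by
    ext j'; simp
  rw [this, Fin.card_Iio]

theorem rk_lt_card {γ : Type*} [LinearOrder γ] {T : Finset γ} {x : γ} (hx : x ∈ T) :
    rk T x < T.card := by
  have hsub : T.filter (· < x) ⊆ T.erase x := by
    intro y hy
    rw [Finset.mem_filter] at hy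
    exact Finset.mem_erase.mpr ⟨ne_of_lt hy.2, hy.1⟩
  calc rk T x ≤ (T.erase x).card := Finset.card_le_card hsub
    _ < T.card := Finset.card_erase_lt_of_mem hx

theorem enum_rk {γ : Type*} [LinearOrder γ] (T : Finset γ) {k : ℕ} (hT : T.card = k)
    {x : γ} (hx : x ∈ T) (hb : rk T x < k) : T.orderEmbOfFin hT ⟨rk T x, hb⟩ = x := by
  have : x ∈ Set.range (T.orderEmbOfFin hT) := by
    rw [Finset.range_orderEmbOfFin]; exact hx
  obtain ⟨j, hj⟩ := this
  have hr : rk T x = j := by rw [← hj, rk_enum]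
  have : (⟨rk T x, hb⟩ : Fin k) = j := Fin.ext hr
  rw [this, hj]

theorem rk_strictMonoOn {γ : Type*} [LinearOrder γ] {T : Finset γ} {x y : γ}
    (hx : x ∈ T) (hxy : x < y) : rk T x < rk T y := by
  apply Finset.card_lt_card
  rw [Finset.ssubset_iff_of_subset]
  · exact ⟨x, by simp [hx, hxy], by simp⟩
  · intro z hz
    rw [Finset.mem_filter] at hz ⊢
    exact ⟨hz.1, hz.2.trans hxy⟩

/-- embed a finite subset of a linear order into an infinite set of naturals -/
theorem embed {γ : Type*} [LinearOrder γ] (S : Finset γ) {X : Set ℕ} (hX : X.Infinite) :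
    ∃ φ : γ → ℕ, (∀ v ∈ S, φ v ∈ X) ∧
      (∀ v ∈ S, ∀ w ∈ S, (φ v < φ w ↔ v < w) ∧ (φ v = φ w ↔ v = w)) := by
  obtain ⟨T, hTX, hTcard⟩ := hX.exists_subset_card_eq S.card
  refine ⟨fun v => if hv : v ∈ S then T.orderEmbOfFin hTcard ⟨rk S v, hTcard ▸ (hTcard ▸ rk_lt_card hv)⟩ else 0, ?_, ?_⟩
  · intro v hv
    simp only [dif_pos hv]
    exact hTX (Finset.orderEmbOfFin_mem _ _ _)
  · intro v hv w hw
    have hmono : ∀ a ∈ S, ∀ b ∈ S, a < b →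
        (if ha : a ∈ S then T.orderEmbOfFin hTcard ⟨rk S a, hTcard ▸ rk_lt_card ha⟩ else 0) <
        (if hb : b ∈ S then T.orderEmbOfFin hTcard ⟨rk S b, hTcard ▸ rk_lt_card hb⟩ else 0) := by
      intro a ha b hb hab
      simp only [dif_pos ha, dif_pos hb]
      exact (T.orderEmbOfFin hTcard).strictMono (by simpa using rk_strictMonoOn ha hab)
    constructor
    · constructor
      · intro h
        rcases lt_trichotomy v w with hc | hc | hc
        · exact hc
        · subst hc; exact absurd h (lt_irrefl _)
        · exact absurd (hmono w hw v hv hc) (lt_asymm h)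
      · exact hmono v hv w hw
    · constructor
      · intro h
        rcases lt_trichotomy v w with hc | hc | hc
        · exact absurd h (ne_of_lt (hmono v hv w hw hc))
        · exact hc
        · exact absurd h.symm (ne_of_lt (hmono w hw v hv hc))
      · rintro rfl; rfl


def Homog {R : Type*} (n : ℕ) (c : Finset ℕ → R) (X : Set ℕ) : Prop :=
  ∀ f g f' g' : Fin n → ℕ, StrictMono f → StrictMono g → StrictMono f' → StrictMono g' →
    (∀ p, f p ∈ X) → (∀ p, g p ∈ X) → (∀ p, f' p ∈ X) → (∀ p, g' p ∈ X) →
    pairIso f g f' g' → (c (img f) = c (img g) ↔ c (img f') = c (img g'))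

theorem existsHomog {R : Type*} (n : ℕ) (hn : 0 < n) (c : Finset ℕ → R) :
    ∃ X : Set ℕ, X.Infinite ∧ Homog n c X := by
  classical
  let χ : Finset ℕ → Finset (Finset (Fin (2*n)) × Finset (Fin (2*n))) := fun T =>
    if h : T.card = 2*n then
      Finset.univ.filter (fun IJ => c (IJ.1.image (T.orderEmbOfFin h)) = c (IJ.2.image (T.orderEmbOfFin h)))
    else ∅
  obtain ⟨X, _, hXinf, P, hP⟩ := inf_ramsey (2*n) χ Set.univ Set.infinite_univ
  have HOM : ∀ e : Fin (2*n) → ℕ, StrictMono e → (∀ q, e q ∈ X) →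
      ∀ I J : Finset (Fin (2*n)),
      (c (I.image e) = c (J.image e) ↔ (I, J) ∈ P) := by
    intro e he heX I J
    have hTcard : (img e).card = 2*n := card_img he.injective
    have hTX : ↑(img e) ⊆ X := by
      intro x hx
      rw [Finset.mem_coe, mem_img] at hx
      obtain ⟨p, rfl⟩ := hx; exact heX p
    have hPT : χ (img e) = P := hP (img e) hTX hTcard
    have henum0 := Finset.orderEmbOfFin_unique hTcard (f := e) (fun q => mem_img.mpr ⟨q, rfl⟩) he
    have henum : ∀ q, (img e).orderEmbOfFin hTcard q = e q := fun q => (congrFun henum0 q).symm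
    have himg : ∀ K : Finset (Fin (2*n)), K.image ((img e).orderEmbOfFin hTcard) = K.image e :=
      fun K => Finset.image_congr (fun q _ => henum q)
    rw [← hPT]
    simp only [χ, dif_pos hTcard, Finset.mem_filter, Finset.mem_univ, true_and]
    rw [himg I, himg J]
  let pat : (Fin n → ℕ) → (Fin n → ℕ) → Fin n → ℕ := fun f g p => rk (img f ∪ img g) (f p)
  let pat' : (Fin n → ℕ) → (Fin n → ℕ) → Fin n → ℕ := fun f g q => rk (img f ∪ img g) (g q)
  have h2n : 0 < 2*n := by omega
  let mkI : (Fin n → ℕ) → (Fin n → ℕ) → Finset (Fin (2*n)) := fun f g =>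
    Finset.univ.image (fun p => (⟨pat f g p % (2*n), Nat.mod_lt _ h2n⟩ : Fin (2*n)))
  let mkJ : (Fin n → ℕ) → (Fin n → ℕ) → Finset (Fin (2*n)) := fun f g =>
    Finset.univ.image (fun q => (⟨pat' f g q % (2*n), Nat.mod_lt _ h2n⟩ : Fin (2*n)))
  have CANON : ∀ f g : Fin n → ℕ, StrictMono f → StrictMono g →
      (∀ p, f p ∈ X) → (∀ p, g p ∈ X) →
      (c (img f) = c (img g) ↔ (mkI f g, mkJ f g) ∈ P) := by
    intro f g hf hg hfX hgX
    have hm : (img f ∪ img g).card ≤ 2*n := by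
      refine le_trans (Finset.card_union_le _ _) ?_
      rw [card_img hf.injective, card_img hg.injective]; omega
    have hUne : (img f ∪ img g).Nonempty :=
      ⟨f ⟨0, hn⟩, Finset.mem_union_left _ (mem_img.mpr ⟨_, rfl⟩)⟩
    set U := img f ∪ img g with hU
    have hUX : ↑U ⊆ X := by
      intro x hx
      rw [Finset.mem_coe, hU, Finset.mem_union, mem_img, mem_img] at hx
      rcases hx with ⟨p, rfl⟩ | ⟨p, rfl⟩
      exacts [hfX p, hgX p]
    have hIoi : (X ∩ Set.Ioi (U.max' hUne)).Infinite := by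
      have he : X \ Set.Iic (U.max' hUne) = X ∩ Set.Ioi (U.max' hUne) := by
        ext x; simp [not_le]
      rw [← he]; exact hXinf.diff (Set.finite_Iic _)
    obtain ⟨V, hVsub, hVcard⟩ := hIoi.exists_subset_card_eq (2*n - U.card)
    have hVgt : ∀ v ∈ V, ∀ u ∈ U, u < v := fun v hv u hu =>
      lt_of_le_of_lt (U.le_max' u hu) (hVsub hv).2
    have hdisj : Disjoint U V := by
      rw [Finset.disjoint_left]
      intro x hxU hxV
      exact absurd (hVgt x hxV x hxU) (lt_irrefl x)
    set T := U ∪ V with hT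
    have hTcard : T.card = 2*n := by
      rw [hT, Finset.card_union_of_disjoint hdisj, hVcard]; omega
    have hTX : ↑T ⊆ X := by
      intro x hx
      rw [Finset.mem_coe, hT, Finset.mem_union] at hx
      rcases hx with hx | hx
      exacts [hUX hx, (hVsub hx).1]
    have heX : ∀ q, T.orderEmbOfFin hTcard q ∈ X :=
      fun q => hTX (Finset.orderEmbOfFin_mem _ _ _)
    have hrkT : ∀ x ∈ U, T.filter (· < x) = U.filter (· < x) := by
      intro x hx
      ext y
      simp only [Finset.mem_filter, hT, Finset.mem_union]
      constructor
      · rintro ⟨hy | hy, hlt⟩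
        · exact ⟨hy, hlt⟩
        · exact absurd hlt (not_lt.mpr (le_of_lt (hVgt y hy x hx)))
      · rintro ⟨hy, hlt⟩; exact ⟨Or.inl hy, hlt⟩
    have key : ∀ (h : Fin n → ℕ), (∀ p, h p ∈ U) → ∀ p (hb : rk U (h p) % (2*n) < 2*n),
        T.orderEmbOfFin hTcard ⟨rk U (h p) % (2*n), hb⟩ = h p := by
      intro h hhU p hb
      have h1 : rk U (h p) < U.card := rk_lt_card (hhU p)
      have h2 : rk T (h p) = rk U (h p) := by rw [rk, rk, hrkT _ (hhU p)]
      have h3 : rk U (h p) % (2*n) = rk U (h p) := Nat.mod_eq_of_lt (lt_of_lt_of_le h1 hm)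
      have h4 : rk T (h p) < 2*n := by omega
      have h5 := enum_rk T hTcard (Finset.mem_union_left _ (hhU p)) h4
      have h6 : (⟨rk U (h p) % (2*n), hb⟩ : Fin (2*n)) = ⟨rk T (h p), h4⟩ := Fin.ext (by show rk U (h p) % (2*n) = rk T (h p); omega)
      rw [h6]; exact h5
    have himgI : (mkI f g).image (T.orderEmbOfFin hTcard) = img f := by
      show (Finset.image _ Finset.univ).image _ = _
      rw [Finset.image_image]
      exact Finset.image_congr (fun p _ => key f (fun p => Finset.mem_union_left _ (mem_img.mpr ⟨p, rfl⟩)) p _)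
    have himgJ : (mkJ f g).image (T.orderEmbOfFin hTcard) = img g := by
      show (Finset.image _ Finset.univ).image _ = _
      rw [Finset.image_image]
      exact Finset.image_congr (fun q _ => key g (fun q => Finset.mem_union_right _ (mem_img.mpr ⟨q, rfl⟩)) q _)
    rw [← himgI, ← himgJ]
    exact HOM _ (T.orderEmbOfFin hTcard).strictMono heX _ _
  have MAIN : ∀ (u v u' v' : Fin n → ℕ), StrictMono u → StrictMono v → StrictMono u' → StrictMono v' →
      pairIso u v u' v' → ∀ p, rk (img u ∪ img v) (u p) = rk (img u' ∪ img v') (u' p) := by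
    intro u v u' v' hu hv hu' hv' hiso p
    have decompF : ∀ (u v : Fin n → ℕ), Function.Injective u →
        (img u).filter (· < u p) = (Finset.univ.filter (fun p' => u p' < u p)).image u := by
      intro u v huinj
      ext y
      simp only [Finset.mem_filter, mem_img, Finset.mem_image, Finset.mem_univ, true_and]
      constructor
      · rintro ⟨⟨p', rfl⟩, hlt⟩; exact ⟨p', hlt, rfl⟩
      · rintro ⟨p', hlt, rfl⟩; exact ⟨⟨p', rfl⟩, hlt⟩
    have decompG : ∀ (u v : Fin n → ℕ),
        (img v).filter (· < u p) = (Finset.univ.filter (fun q => v q < u p)).image v := by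
      intro u v
      ext y
      simp only [Finset.mem_filter, mem_img, Finset.mem_image, Finset.mem_univ, true_and]
      constructor
      · rintro ⟨⟨q, rfl⟩, hlt⟩; exact ⟨q, hlt, rfl⟩
      · rintro ⟨q, hlt, rfl⟩; exact ⟨⟨q, rfl⟩, hlt⟩
    have decompI : ∀ (u v : Fin n → ℕ),
        ((img u).filter (· < u p)) ∩ ((img v).filter (· < u p))
          = (Finset.univ.filter (fun q => v q < u p ∧ ∃ p', u p' = v q)).image v := by
      intro u v
      ext y
      simp only [Finset.mem_inter, Finset.mem_filter, mem_img, Finset.mem_image,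
        Finset.mem_univ, true_and]
      constructor
      · rintro ⟨⟨⟨p', rfl⟩, hlt⟩, ⟨⟨q, hq⟩, _⟩⟩
        exact ⟨q, ⟨hq ▸ hlt, p', hq.symm⟩, hq⟩
      · rintro ⟨q, ⟨hlt, p', hp'⟩, rfl⟩
        exact ⟨⟨⟨p', hp'⟩, hlt⟩, ⟨⟨q, rfl⟩, hlt⟩⟩
    have hsplit : ∀ (u v : Fin n → ℕ), Function.Injective u → Function.Injective v →
        rk (img u ∪ img v) (u p) + (Finset.univ.filter (fun q => v q < u p ∧ ∃ p', u p' = v q)).card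
        = (Finset.univ.filter (fun p' => u p' < u p)).card + (Finset.univ.filter (fun q => v q < u p)).card := by
      intro u v huinj hvinj
      have h1 : rk (img u ∪ img v) (u p)
          = ((img u).filter (· < u p) ∪ (img v).filter (· < u p)).card := by
        rw [rk, Finset.filter_union]
      rw [h1]
      have h2 := Finset.card_union_add_card_inter ((img u).filter (· < u p)) ((img v).filter (· < u p))
      rw [decompI u v] at h2
      rw [← Finset.card_image_of_injective (Finset.univ.filter (fun q => v q < u p ∧ ∃ p', u p' = v q)) hvinj]
      rw [h2, decompF u v huinj, decompG u v,
        Finset.card_image_of_injective _ huinj, Finset.card_image_of_injective _ hvinj]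
    have e1 := hsplit u v hu.injective hv.injective
    have e2 := hsplit u' v' hu'.injective hv'.injective
    have c1 : (Finset.univ.filter (fun p' => u p' < u p)).card
        = (Finset.univ.filter (fun p' => u' p' < u' p)).card := by
      congr 1
      apply Finset.filter_congr
      intro p' _
      rw [hu.lt_iff_lt, hu'.lt_iff_lt]
    have c2 : (Finset.univ.filter (fun q => v q < u p)).card
        = (Finset.univ.filter (fun q => v' q < u' p)).card := by
      congr 1
      apply Finset.filter_congr
      intro q _
      exact hiso.gt_iff p q
    have c3 : (Finset.univ.filter (fun q => v q < u p ∧ ∃ p', u p' = v q)).card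
        = (Finset.univ.filter (fun q => v' q < u' p ∧ ∃ p', u' p' = v' q)).card := by
      congr 1
      apply Finset.filter_congr
      intro q _
      constructor
      · rintro ⟨hlt, p', hp'⟩
        exact ⟨(hiso.gt_iff p q).mp hlt, p', (hiso p' q).2.mp hp'⟩
      · rintro ⟨hlt, p', hp'⟩
        exact ⟨(hiso.gt_iff p q).mpr hlt, p', (hiso p' q).2.mpr hp'⟩
    omega
  refine ⟨X, hXinf, ?_⟩
  intro f g f' g' hf hg hf' hg' hfX hgX hf'X hg'X hiso
  rw [CANON f g hf hg hfX hgX, CANON f' g' hf' hg' hf'X hg'X]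
  have hpatI : ∀ p, pat f g p = pat f' g' p := MAIN f g f' g' hf hg hf' hg' hiso
  have hpatJ : ∀ q, pat' f g q = pat' f' g' q := by
    intro q
    have h1 : pat' f g q = rk (img g ∪ img f) (g q) := by
      show rk (img f ∪ img g) (g q) = _
      rw [Finset.union_comm]
    have h2 : pat' f' g' q = rk (img g' ∪ img f') (g' q) := by
      show rk (img f' ∪ img g') (g' q) = _
      rw [Finset.union_comm]
    rw [h1, h2]
    exact MAIN g f g' f' hg hf hg' hf' hiso.symm q
  have hI : mkI f g = mkI f' g' := by
    show Finset.image _ _ = Finset.image _ _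
    exact Finset.image_congr (fun p _ => Fin.ext (by simp only [hpatI p]))
  have hJ : mkJ f g = mkJ f' g' := by
    show Finset.image _ _ = Finset.image _ _
    exact Finset.image_congr (fun q _ => Fin.ext (by simp only [hpatJ q]))
  rw [hI, hJ]

theorem step_exists {n : ℕ} (hn : 0 < n) (a b : Fin n → ℕ) (ha : StrictMono a) (hb : StrictMono b)
    (v : Fin n → ℚ) (hv : StrictMono v) (F : Finset ℚ) :
    ∃ v' : Fin n → ℚ, StrictMono v' ∧ pairIso v v' a b ∧
      ∀ q, (∀ p, a p ≠ b q) → v' q ∉ F := by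
  classical
  have hne : (Finset.univ : Finset (Fin n)).Nonempty := ⟨⟨0, hn⟩, Finset.mem_univ _⟩
  set B : Finset ℚ := Finset.univ.image v with hB
  have hBne : B.Nonempty := hne.image v
  set lo : ℚ := B.min' hBne - 1 with hlodef
  set hi : ℚ := B.max' hBne + 1 with hhidef
  set LoS : Fin n → Finset ℚ :=
    fun q => insert lo ((Finset.univ.filter (fun p => a p < b q)).image v) with hLoS
  set HiS : Fin n → Finset ℚ :=
    fun q => insert hi ((Finset.univ.filter (fun p => b q < a p)).image v) with hHiS
  set Lo : Fin n → ℚ := fun q => (LoS q).max' (Finset.insert_nonempty _ _) with hLo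
  set Hi : Fin n → ℚ := fun q => (HiS q).min' (Finset.insert_nonempty _ _) with hHi
  have hlo_lt : ∀ p, lo < v p := fun p => by
    have h1 : B.min' hBne ≤ v p := Finset.min'_le _ _ (Finset.mem_image_of_mem v (Finset.mem_univ p))
    rw [hlodef]; linarith
  have hhi_gt : ∀ p, v p < hi := fun p => by
    have h1 : v p ≤ B.max' hBne := Finset.le_max' _ _ (Finset.mem_image_of_mem v (Finset.mem_univ p))
    rw [hhidef]; linarith
  have hvLo : ∀ p q, a p < b q → v p ≤ Lo q := fun p q h =>
    Finset.le_max' _ _ (Finset.mem_insert_of_mem (Finset.mem_image_of_mem v (by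
      simp only [Finset.mem_filter, Finset.mem_univ, true_and]; exact h)))
  have hHiv : ∀ p q, b q < a p → Hi q ≤ v p := fun p q h =>
    Finset.min'_le _ _ (Finset.mem_insert_of_mem (Finset.mem_image_of_mem v (by
      simp only [Finset.mem_filter, Finset.mem_univ, true_and]; exact h)))
  have hLoHi : ∀ q, Lo q < Hi q := by
    intro q
    rw [hLo]
    rw [Finset.max'_lt_iff]
    intro y hy
    rw [hHi, Finset.lt_min'_iff]
    intro z hz
    rcases Finset.mem_insert.mp hy with rfl | hy
    · rcases Finset.mem_insert.mp hz with rfl | hz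
      · have := hlo_lt ⟨0, hn⟩
        have := hhi_gt ⟨0, hn⟩
        linarith
      · obtain ⟨p, _, rfl⟩ := Finset.mem_image.mp hz
        exact hlo_lt p
    · obtain ⟨p, hp, rfl⟩ := Finset.mem_image.mp hy
      rcases Finset.mem_insert.mp hz with rfl | hz
      · exact hhi_gt p
      · obtain ⟨p', hp', rfl⟩ := Finset.mem_image.mp hz
        have h1 := (Finset.mem_filter.mp hp).2
        have h2 := (Finset.mem_filter.mp hp').2
        exact hv (ha.lt_iff_lt.mp (lt_trans h1 h2))
  have hside : ∀ p q, (¬ ∃ p', a p' = b q) → v p ≤ Lo q ∨ Hi q ≤ v p := by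
    intro p q hnew
    rcases lt_trichotomy (a p) (b q) with h | h | h
    · exact Or.inl (hvLo p q h)
    · exact absurd ⟨p, h⟩ hnew
    · exact Or.inr (hHiv p q h)
  have hLomono : ∀ q q' : Fin n, q ≤ q' → Lo q ≤ Lo q' := by
    intro q q' hqq'
    apply Finset.max'_subset
    intro y hy
    rcases Finset.mem_insert.mp hy with rfl | hy
    · exact Finset.mem_insert_self _ _
    · obtain ⟨p, hp, rfl⟩ := Finset.mem_image.mp hy
      refine Finset.mem_insert_of_mem (Finset.mem_image_of_mem v ?_)
      simp only [Finset.mem_filter, Finset.mem_univ, true_and] at hp ⊢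
      exact lt_of_lt_of_le hp (Nat.cast_le.mpr (hb.monotone hqq') |>.trans_eq rfl)
  set Qs : Finset (Fin n) := Finset.univ.filter (fun q => ¬ ∃ p, a p = b q) with hQs
  set ε : ℚ := if hQ : Qs.Nonempty then (Qs.image (fun q => Hi q - Lo q)).min' (hQ.image _) else 1
    with hε
  have hε_pos : 0 < ε := by
    by_cases hQ : Qs.Nonempty
    · rw [hε, dif_pos hQ, Finset.lt_min'_iff]
      intro y hy
      obtain ⟨q, _, rfl⟩ := Finset.mem_image.mp hy
      linarith [hLoHi q]
    · rw [hε, dif_neg hQ]; norm_num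
  have hε_le : ∀ q ∈ Qs, ε ≤ Hi q - Lo q := by
    intro q hq
    rw [hε, dif_pos ⟨q, hq⟩]
    exact Finset.min'_le _ _ (Finset.mem_image_of_mem _ hq)
  have hIoo : (Set.Ioo (0:ℚ) (ε / (n+2))).Infinite := Set.Ioo_infinite (by positivity)
  set bad : Finset ℚ := Qs.biUnion (fun q => F.image (fun z => (z - Lo q) / ((q:ℕ)+1))) with hbad
  obtain ⟨δ, hδmem⟩ := (hIoo.diff bad.finite_toSet).nonempty
  obtain ⟨⟨hδ0, hδε⟩, hδbad⟩ := hδmem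
  set v' : Fin n → ℚ := fun q => if h : ∃ p, a p = b q then v h.choose else Lo q + δ * ((q:ℕ)+1)
    with hv'
  have hforced : ∀ q (h : ∃ p, a p = b q), v' q = v h.choose ∧ a h.choose = b q := by
    intro q h
    constructor
    · rw [hv']; simp only [dif_pos h]
    · exact h.choose_spec
  have hq1pos : ∀ q : Fin n, (0:ℚ) < ((q:ℕ):ℚ) + 1 := by
    intro q; positivity
  have hnewLo : ∀ q, (¬ ∃ p, a p = b q) → Lo q < v' q := by
    intro q h
    rw [hv']; simp only [dif_neg h]
    nlinarith [hq1pos q]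
  have hnewHi : ∀ q, (¬ ∃ p, a p = b q) → v' q < Hi q := by
    intro q h
    have hqQs : q ∈ Qs := by rw [hQs]; simp only [Finset.mem_filter, Finset.mem_univ, true_and]; exact h
    have h1 : ((q:ℕ):ℚ) + 1 ≤ (n:ℚ) + 2 := by
      have := q.isLt
      have : ((q:ℕ):ℚ) ≤ (n:ℚ) := by exact_mod_cast le_of_lt this
      linarith
    have h2 : δ * (((q:ℕ):ℚ) + 1) < ε := by
      calc δ * (((q:ℕ):ℚ) + 1) ≤ δ * ((n:ℚ) + 2) := by
            apply mul_le_mul_of_nonneg_left h1 (le_of_lt hδ0)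
        _ < (ε / ((n:ℚ)+2)) * ((n:ℚ) + 2) := by
            exact mul_lt_mul_of_pos_right hδε (by positivity)
        _ = ε := by field_simp
    have h3 := hε_le q hqQs
    rw [hv']; simp only [dif_neg h]
    linarith
  have hnewF : ∀ q, (¬ ∃ p, a p = b q) → v' q ∉ F := by
    intro q h hmem
    have hqQs : q ∈ Qs := by rw [hQs]; simp only [Finset.mem_filter, Finset.mem_univ, true_and]; exact h
    apply hδbad
    rw [Finset.mem_coe, hbad, Finset.mem_biUnion]
    refine ⟨q, hqQs, ?_⟩
    rw [Finset.mem_image]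
    refine ⟨v' q, hmem, ?_⟩
    have hval : v' q = Lo q + δ * (((q:ℕ):ℚ) + 1) := by rw [hv']; simp only [dif_neg h]
    rw [hval]
    field_simp
    ring
  have hmono : StrictMono v' := by
    intro q q' hqq'
    by_cases h : ∃ p, a p = b q
    · obtain ⟨hval, hspec⟩ := hforced q h
      by_cases h' : ∃ p, a p = b q'
      · obtain ⟨hval', hspec'⟩ := hforced q' h'
        rw [hval, hval']
        apply hv
        apply ha.lt_iff_lt.mp
        rw [hspec, hspec']
        exact_mod_cast hb hqq'
      · rw [hval]
        have : a h.choose < b q' := by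
          rw [hspec]; exact_mod_cast hb hqq'
        calc v h.choose ≤ Lo q' := hvLo _ _ this
          _ < v' q' := hnewLo q' h'
    · by_cases h' : ∃ p, a p = b q'
      · obtain ⟨hval', hspec'⟩ := hforced q' h'
        rw [hval']
        have : b q < a h'.choose := by
          rw [hspec']; exact_mod_cast hb hqq'
        calc v' q < Hi q := hnewHi q h
          _ ≤ v h'.choose := hHiv _ _ this
      · have hLole : Lo q ≤ Lo q' := hLomono q q' (le_of_lt hqq')
        rcases eq_or_lt_of_le hLole with heq | hlt
        · have hval : v' q = Lo q + δ * (((q:ℕ):ℚ) + 1) := by rw [hv']; simp only [dif_neg h]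
          have hval' : v' q' = Lo q' + δ * (((q':ℕ):ℚ) + 1) := by rw [hv']; simp only [dif_neg h']
          rw [hval, hval', ← heq]
          have : ((q:ℕ):ℚ) < ((q':ℕ):ℚ) := by exact_mod_cast hqq'
          nlinarith
        · -- Lo q < Lo q' : show Hi q ≤ Lo q'
          have hgap : Hi q ≤ Lo q' := by
            have hmem := Finset.max'_mem (LoS q') (Finset.insert_nonempty _ _)
            rcases Finset.mem_insert.mp hmem with heq2 | hmem2
            · exfalso
              have h1 : lo ≤ Lo q := Finset.le_max' _ _ (Finset.mem_insert_self _ _)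
              have h2 : Lo q' = lo := heq2
              rw [h2] at hlt; linarith
            · obtain ⟨pstar, hpstar, hvalstar⟩ := Finset.mem_image.mp hmem2
              rcases lt_trichotomy (a pstar) (b q) with hc | hc | hc
              · exfalso
                have := hvLo pstar q hc
                rw [hvalstar] at this
                linarith
              · exact absurd ⟨pstar, hc⟩ h
              · have := hHiv pstar q hc
                rw [hvalstar] at this
                exact this
          calc v' q < Hi q := hnewHi q h
            _ ≤ Lo q' := hgap
            _ < v' q' := hnewLo q' h'
  refine ⟨v', hmono, ?_, fun q hq => hnewF q (by push_neg; exact fun p => hq p)⟩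
  intro p q
  by_cases h : ∃ p', a p' = b q
  · obtain ⟨hval, hspec⟩ := hforced q h
    rw [hval]
    constructor
    · rw [hv.lt_iff_lt, ← Nat.cast_lt (α := ℕ)]
      constructor
      · intro hlt
        have : a p < a h.choose := ha hlt
        rw [hspec] at this; exact this
      · intro hlt
        apply ha.lt_iff_lt.mp
        rw [hspec]; exact hlt
    · constructor
      · intro heq
        have : p = h.choose := hv.injective heq
        rw [this, hspec]
      · intro heq
        have : a p = a h.choose := by rw [hspec]; exact heq
        rw [ha.injective this]
  · constructor
    · constructor
      · intro hlt
        rcases lt_trichotomy (a p) (b q) with hc | hc | hc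
        · exact hc
        · exact absurd ⟨p, hc⟩ h
        · exfalso
          have h1 := hHiv p q hc
          have h2 := hnewHi q h
          linarith
      · intro hlt
        calc v p ≤ Lo q := hvLo p q hlt
          _ < v' q := hnewLo q h
    · constructor
      · intro heq
        exfalso
        rcases hside p q h with h1 | h1
        · have := hnewLo q h; rw [← heq] at this; linarith
        · have := hnewHi q h; rw [← heq] at this; linarith
      · intro heq
        exact absurd ⟨p, heq⟩ h


theorem isoOff {γ δ : Type*} [LinearOrder γ] [LinearOrder δ] {n : ℕ} {i : Fin n}
    {f g : Fin n → γ} {f' g' : Fin n → δ}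
    (hf : StrictMono f) (hg : StrictMono g) (hf' : StrictMono f') (hg' : StrictMono g')
    (hfg : ∀ p, p ≠ i → f p = g p) (hi : f i < g i)
    (hfg' : ∀ p, p ≠ i → f' p = g' p) (hi' : f' i < g' i) :
    pairIso f g f' g' := by
  intro p q
  by_cases hq : q = i
  · subst hq
    by_cases hp : p = q
    · subst hp
      exact ⟨iff_of_true hi hi', iff_of_false (ne_of_lt hi) (ne_of_lt hi')⟩
    · rcases lt_trichotomy p q with hpi | hpi | hpi
      · have h1 : f p < g q := by rw [hfg p hp]; exact hg hpi
        have h2 : f' p < g' q := by rw [hfg' p hp]; exact hg' hpi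
        exact ⟨iff_of_true h1 h2, iff_of_false (ne_of_lt h1) (ne_of_lt h2)⟩
      · exact absurd hpi hp
      · have h1 : g q < f p := by rw [hfg p hp]; exact hg hpi
        have h2 : g' q < f' p := by rw [hfg' p hp]; exact hg' hpi
        exact ⟨iff_of_false (lt_asymm h1) (lt_asymm h2),
          iff_of_false (fun he => absurd he.symm (ne_of_lt h1)) (fun he => absurd he.symm (ne_of_lt h2))⟩
  · have h1 : g q = f q := (hfg q hq).symm
    have h2 : g' q = f' q := (hfg' q hq).symm
    rw [h1, h2, hf.lt_iff_lt, hf'.lt_iff_lt, hf.injective.eq_iff, hf'.injective.eq_iff]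
    exact ⟨Iff.rfl, Iff.rfl⟩

variable {R : Type*}

def free (n : ℕ) (c : Finset ℕ → R) (X : Set ℕ) (i : Fin n) : Prop :=
  ∃ f g : Fin n → ℕ, StrictMono f ∧ StrictMono g ∧ (∀ p, f p ∈ X) ∧ (∀ p, g p ∈ X) ∧
    (∀ p, p ≠ i → f p = g p) ∧ f i < g i ∧ c (img f) = c (img g)

theorem free_elim {n : ℕ} {c : Finset ℕ → R} {X : Set ℕ} (hH : Homog n c X) {i : Fin n}
    (hfree : free n c X i) {f g : Fin n → ℕ} (hf : StrictMono f) (hg : StrictMono g)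
    (hfX : ∀ p, f p ∈ X) (hgX : ∀ p, g p ∈ X)
    (hagree : ∀ p, p ≠ i → f p = g p) (hlt : f i < g i) :
    c (img f) = c (img g) := by
  obtain ⟨w1, w2, h1, h2, h3, h4, h5, h6, h7⟩ := hfree
  exact (hH w1 w2 f g h1 h2 hf hg h3 h4 hfX hgX (isoOff h1 h2 hf hg h5 h6 hagree hlt)).mp h7

theorem lemA {n : ℕ} {c : Finset ℕ → R} {X : Set ℕ} (hH : Homog n c X) :
    ∀ (k : ℕ) (f g : Fin n → ℕ), StrictMono f → StrictMono g →
    (∀ p, f p ∈ X) → (∀ p, g p ∈ X) →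
    (∀ i, ¬ free n c X i → f i = g i) →
    (Finset.univ.filter (fun j => f j ≠ g j)).card = k →
    c (img f) = c (img g) := by
  classical
  intro k
  induction k using Nat.strong_induction_on with
  | _ k ih =>
  intro f g hf hg hfX hgX hagree hcard
  by_cases hD : (Finset.univ.filter (fun j => f j ≠ g j)) = ∅
  · have hfg : f = g := by
      funext j
      by_contra hne
      have hj : j ∈ Finset.univ.filter (fun j => f j ≠ g j) := by
        simp only [Finset.mem_filter, Finset.mem_univ, true_and]; exact hne
      rw [hD] at hj
      exact absurd hj (Finset.notMem_empty _)
    rw [hfg]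
  · have hDne : (Finset.univ.filter (fun j => f j ≠ g j)).Nonempty :=
      Finset.nonempty_of_ne_empty hD
    obtain ⟨j, hjD, hmono⟩ : ∃ j, j ∈ Finset.univ.filter (fun j => f j ≠ g j) ∧
        StrictMono (Function.update f j (g j)) := by
      by_cases hS : (Finset.univ.filter (fun j => g j < f j)).Nonempty
      · set j := (Finset.univ.filter (fun j => g j < f j)).min' hS with hj
        have hjmem := (Finset.univ.filter (fun j => g j < f j)).min'_mem hS
        have hjlt : g j < f j := (Finset.mem_filter.mp hjmem).2
        have hjD : j ∈ Finset.univ.filter (fun j => f j ≠ g j) := by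
          simp only [Finset.mem_filter, Finset.mem_univ, true_and]
          exact ne_of_gt hjlt
        refine ⟨j, hjD, ?_⟩
        intro p q hpq
        rcases eq_or_ne p j with rfl | hp
        · rw [Function.update_self, Function.update_of_ne (ne_of_gt hpq)]
          exact lt_trans hjlt (hf hpq)
        · rw [Function.update_of_ne hp]
          rcases eq_or_ne q j with rfl | hq
          · rw [Function.update_self]
            have hple : f p ≤ g p := by
              by_cases hpD : f p = g p
              · exact le_of_eq hpD
              · apply le_of_not_gt
                intro hc
                have hpS : p ∈ Finset.univ.filter (fun j => g j < f j) := by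
                  simp only [Finset.mem_filter, Finset.mem_univ, true_and]; exact hc
                have hle := (Finset.univ.filter (fun j => g j < f j)).min'_le p hpS
                rw [← hj] at hle
                exact absurd hpq (not_lt.mpr hle)
            exact lt_of_le_of_lt hple (hg hpq)
          · rw [Function.update_of_ne hq]; exact hf hpq
      · set j := (Finset.univ.filter (fun j => f j ≠ g j)).max' hDne with hj
        have hjmem := (Finset.univ.filter (fun j => f j ≠ g j)).max'_mem hDne
        have hjne : f j ≠ g j := (Finset.mem_filter.mp hjmem).2
        have hjlt : f j < g j := by
          rcases lt_trichotomy (f j) (g j) with hc | hc | hc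
          · exact hc
          · exact absurd hc hjne
          · exact absurd ⟨j, by simp only [Finset.mem_filter, Finset.mem_univ, true_and]; exact hc⟩ hS
        refine ⟨j, hjmem, ?_⟩
        intro p q hpq
        rcases eq_or_ne p j with rfl | hp
        · rw [Function.update_self, Function.update_of_ne (ne_of_gt hpq)]
          have hqD : f q = g q := by
            by_contra hc
            have hqmem : q ∈ Finset.univ.filter (fun j => f j ≠ g j) := by
              simp only [Finset.mem_filter, Finset.mem_univ, true_and]; exact hc
            have hle := Finset.le_max' _ q hqmem
            rw [← hj] at hle
            exact absurd hpq (not_lt.mpr hle)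
          rw [hqD]; exact hg hpq
        · rw [Function.update_of_ne hp]
          rcases eq_or_ne q j with rfl | hq
          · rw [Function.update_self]
            exact lt_trans (hf hpq) hjlt
          · rw [Function.update_of_ne hq]; exact hf hpq
    have hjne : f j ≠ g j := (Finset.mem_filter.mp hjD).2
    have hjfree : free n c X j := by
      by_contra hc
      exact hjne (hagree j hc)
    have huX : ∀ p, Function.update f j (g j) p ∈ X := by
      intro p
      rcases eq_or_ne p j with rfl | hp
      · rw [Function.update_self]; exact hgX p
      · rw [Function.update_of_ne hp]; exact hfX p
    have hcu : c (img f) = c (img (Function.update f j (g j))) := by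
      rcases lt_trichotomy (f j) (g j) with hlt | hlt | hlt
      · exact free_elim hH hjfree hf hmono hfX huX
          (fun p hp => (Function.update_of_ne hp _ _).symm)
          (by rw [Function.update_self]; exact hlt)
      · exact absurd hlt hjne
      · exact (free_elim hH hjfree hmono hf huX hfX
          (fun p hp => Function.update_of_ne hp _ _)
          (by rw [Function.update_self]; exact hlt)).symm
    have hnext : (Finset.univ.filter (fun j' => Function.update f j (g j) j' ≠ g j')).card < k := by
      have herase : Finset.univ.filter (fun j' => Function.update f j (g j) j' ≠ g j')
          = (Finset.univ.filter (fun j' => f j' ≠ g j')).erase j := by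
        ext p
        simp only [Finset.mem_filter, Finset.mem_univ, true_and, Finset.mem_erase]
        rcases eq_or_ne p j with rfl | hp
        · simp [Function.update_self]
        · simp [Function.update_of_ne hp, hp]
      rw [herase, Finset.card_erase_of_mem hjD, hcard]
      have hk0 : k ≠ 0 := by
        intro h0
        rw [h0, Finset.card_eq_zero] at hcard
        exact hD hcard
      omega
    have hrec := ih _ hnext (Function.update f j (g j)) g hmono hg huX hgX (fun i hi => by
      rcases eq_or_ne i j with rfl | hp
      · rw [Function.update_self]
      · rw [Function.update_of_ne hp]; exact hagree i hi) rfl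
    rw [hcu, hrec]

theorem lemB {n : ℕ} {c : Finset ℕ → R} {X : Set ℕ} (hH : Homog n c X) (hX : X.Infinite)
    (hn : 0 < n) (a b : Fin n → ℕ) (ha : StrictMono a) (hb : StrictMono b)
    (haX : ∀ p, a p ∈ X) (hbX : ∀ p, b p ∈ X)
    (hcab : c (img a) = c (img b)) (i : Fin n) (hlt : a i < b i) : free n c X i := by
  classical
  set ρ : Fin n → Option (Fin n) :=
    fun q => if h : ∃ p, a p = b q then some h.choose else none with hρdef
  have hρ : ∀ q p, ρ q = some p ↔ a p = b q := by
    intro q p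
    constructor
    · intro h
      by_cases he : ∃ p', a p' = b q
      · rw [hρdef] at h; simp only [dif_pos he, Option.some.injEq] at h
        rw [← h]
        exact he.choose_spec
      · rw [hρdef] at h
        simp only [dif_neg he] at h
        exact (Option.some_ne_none p h.symm).elim
    · intro h
      have he : ∃ p', a p' = b q := ⟨p, h⟩
      rw [hρdef]; simp only [dif_pos he, Option.some.injEq]
      exact ha.injective (he.choose_spec.trans h.symm)
  have hρmono : ∀ q q' p p', ρ q = some p → ρ q' = some p' → q < q' → p < p' := by
    intro q q' p p' h h' hqq'
    rw [hρ] at h h'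
    apply ha.lt_iff_lt.mp
    rw [h, h']
    exact hb hqq'
  set ρiter : ℕ → Fin n → Option (Fin n) :=
    fun N => Nat.rec (motive := fun _ => Fin n → Option (Fin n)) some
      (fun _ ihf q => (ρ q).bind ihf) N with hρiter
  have hit0 : ∀ q, ρiter 0 q = some q := fun _ => rfl
  have hitS : ∀ N q, ρiter (N+1) q = (ρ q).bind (ρiter N) := fun _ _ => rfl
  have O0 : ∀ N q z, ρ q = some q → ρiter N q = some z → z = q := by
    intro N
    induction N with
    | zero => intro q z _ h2; rw [hit0] at h2; exact (Option.some.inj h2).symm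
    | succ N ihN =>
      intro q z h1 h2
      rw [hitS, h1] at h2
      exact ihN q z h1 h2
  have O1 : ∀ N x z y, ρ x = some z → x < z → ρiter N z = some y → (x:ℕ) + (N+1) ≤ (y:ℕ) := by
    intro N
    induction N with
    | zero =>
      intro x z y h1 h2 h3
      rw [hit0] at h3
      have : z = y := Option.some.inj h3
      subst this
      have : (x:ℕ) < (z:ℕ) := h2
      omega
    | succ N ihN =>
      intro x z y h1 h2 h3
      rw [hitS] at h3
      rw [Option.bind_eq_some_iff] at h3
      obtain ⟨w, hw1, hw2⟩ := h3
      have hzw : z < w := hρmono x z z w h1 hw1 h2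
      have := ihN z w y hw1 hzw hw2
      have : (x:ℕ) < (z:ℕ) := h2
      omega
  have O2 : ∀ N x w z, ρ x = some w → w < x → ρiter N w = some z →
      ∀ y, ρ z = some y → y < z := by
    intro N
    induction N with
    | zero =>
      intro x w z h1 h2 h3 y h4
      rw [hit0] at h3
      have hwz : w = z := Option.some.inj h3
      subst hwz
      exact hρmono w x y w h4 h1 h2
    | succ N ihN =>
      intro x w z h1 h2 h3 y h4
      rw [hitS, Option.bind_eq_some_iff] at h3
      obtain ⟨w₂, hw1, hw2⟩ := h3
      have hw₂w : w₂ < w := hρmono w x w₂ w hw1 h1 h2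
      exact ihN w w₂ z hw1 hw₂w hw2 y h4
  have O3 : ∀ N x z y, ρiter N x = some z → ρ z = some y → z < y → (x:ℕ) + N ≤ (z:ℕ) := by
    intro N
    induction N with
    | zero =>
      intro x z y h1 _ _
      rw [hit0] at h1
      have : x = z := Option.some.inj h1
      subst this; omega
    | succ N ihN =>
      intro x z y h1 h2 h3
      rw [hitS, Option.bind_eq_some_iff] at h1
      obtain ⟨w, hw1, hw2⟩ := h1
      have ihw := ihN w z y hw2 h2 h3
      have hxw : x < w := by
        rcases lt_trichotomy x w with hc | hc | hc
        · exact hc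
        · exfalso
          have hw1' : ρ x = some x := by rw [← hc] at hw1; exact hw1
          have hw2' : ρiter N x = some z := by rw [← hc] at hw2; exact hw2
          have hz : z = x := O0 N x z hw1' hw2'
          rw [hz] at h2 h3
          have hxy : x = y := Option.some.inj (hw1'.symm.trans h2)
          rw [hxy] at h3
          exact absurd h3 (lt_irrefl _)
        · exfalso
          have := O2 N x w z hw1 hc hw2 y h2
          exact absurd h3 (lt_asymm this)
      have : (x:ℕ) < (w:ℕ) := hxw
      omega
  have O4 : ∀ N x y, ρiter (N+1) x = some y → ∃ z, ρiter N x = some z ∧ ρ z = some y := by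
    intro N
    induction N with
    | zero =>
      intro x y h1
      rw [hitS, Option.bind_eq_some_iff] at h1
      obtain ⟨w, hw1, hw2⟩ := h1
      rw [hit0] at hw2
      have : w = y := Option.some.inj hw2
      subst this
      exact ⟨x, hit0 x, hw1⟩
    | succ N ihN =>
      intro x y h1
      have h1' : (ρ x).bind (ρiter (N+1)) = some y := h1
      rw [Option.bind_eq_some_iff] at h1'
      obtain ⟨w, hw1, hw2⟩ := h1'
      obtain ⟨z, hz1, hz2⟩ := ihN w y hw2
      refine ⟨z, ?_, hz2⟩
      show (ρ x).bind (ρiter N) = some z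
      rw [hw1]
      exact hz1
  -- chain in ℚ
  set F₀ : Finset ℚ := Finset.univ.image (fun p => ((a p : ℕ) : ℚ)) with hF₀
  have hstep := fun (v : Fin n → ℚ) (hv : StrictMono v) => step_exists hn a b ha hb v hv F₀
  choose stepF hstep1 hstep2 hstep3 using hstep
  have hcastmono : StrictMono (fun p => ((a p : ℕ) : ℚ)) := by
    intro p q hpq
    change ((a p : ℕ) : ℚ) < ((a q : ℕ) : ℚ)
    exact_mod_cast ha hpq
  set hseq : ℕ → {v : Fin n → ℚ // StrictMono v} :=
    fun t => Nat.rec (motive := fun _ => {v : Fin n → ℚ // StrictMono v})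
      ⟨fun p => ((a p : ℕ) : ℚ), hcastmono⟩
      (fun _ vh => ⟨stepF vh.1 vh.2, hstep1 vh.1 vh.2⟩) t with hseqdef
  set h : ℕ → Fin n → ℚ := fun t => (hseq t).1 with hdef
  have h0 : h 0 = fun p => ((a p : ℕ) : ℚ) := rfl
  have hmono : ∀ t, StrictMono (h t) := fun t => (hseq t).2
  have hiso : ∀ t, pairIso (h t) (h (t+1)) a b := fun t => hstep2 (hseq t).1 (hseq t).2
  have hfresh : ∀ t q, (∀ p, a p ≠ b q) → h (t+1) q ∉ F₀ :=
    fun t q hq => hstep3 (hseq t).1 (hseq t).2 q hq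
  have hCB : ∀ t q p, h t q = h 0 p → ρiter t q = some p := by
    intro t
    induction t with
    | zero =>
      intro q p heq
      have : q = p := (hmono 0).injective heq
      rw [hit0, this]
    | succ t iht =>
      intro q p heq
      by_cases he : ∃ x, a x = b q
      · have hx : ρ q = some he.choose := (hρ q he.choose).mpr he.choose_spec
        have hval : h t he.choose = h (t+1) q := ((hiso t) he.choose q).2.mpr he.choose_spec
        rw [hitS, hx, Option.bind_some]
        exact iht he.choose p (by rw [hval, heq])
      · exfalso
        apply hfresh t q (fun p hp => he ⟨p, hp⟩)
        rw [heq, h0, hF₀]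
        exact Finset.mem_image_of_mem _ (Finset.mem_univ p)
  have hP1 : ∀ t, h 0 i < h (t+1) i := by
    intro t
    induction t with
    | zero => exact ((hiso 0) i i).1.mpr hlt
    | succ t iht => exact lt_trans iht (((hiso (t+1)) i i).1.mpr hlt)
  have hP2 : ∀ q, h n q ≠ h 0 i := by
    intro q heq
    have hiter := hCB n q i heq
    have hiter' : ρiter ((n-1) + 1) q = some i := by
      rw [show (n-1)+1 = n from by omega]; exact hiter
    obtain ⟨z, hz1, hz2⟩ := O4 (n-1) q i hiter'
    have hzi : z < i := by
      rw [hρ] at hz2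
      apply hb.lt_iff_lt.mp
      rw [← hz2]
      exact hlt
    have hle := O3 (n-1) q z i hz1 hz2 hzi
    have h1 : (z:ℕ) < (i:ℕ) := hzi
    have h2 : (i:ℕ) < n := i.isLt
    omega
  have hP3 : ∀ q, h 0 q ≠ h n i := by
    intro q heq
    have hiter := hCB n i q heq.symm
    have hiter' : (ρ i).bind (ρiter (n-1)) = some q := by
      have : ρiter ((n-1) + 1) i = some q := by
        rw [show (n-1)+1 = n from by omega]; exact hiter
      exact this
    rw [Option.bind_eq_some_iff] at hiter'
    obtain ⟨k, hk1, hk2⟩ := hiter'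
    have hik : i < k := by
      rw [hρ] at hk1
      apply ha.lt_iff_lt.mp
      rw [hk1]
      exact hlt
    have hle := O1 (n-1) i k q hk1 hik hk2
    have h2 : (q:ℕ) < n := q.isLt
    omega
  -- choose the wiggle point x
  have hxex : ∃ x : ℚ, h 0 i < x ∧
      (∀ y ∈ Finset.univ.image (h 0) ∪ Finset.univ.image (h n), h 0 i < y → x < y) ∧
      (∀ q, x ≠ h n q) := by
    set G : Finset ℚ := (Finset.univ.image (h 0) ∪ Finset.univ.image (h n)).filter
      (fun y => h 0 i < y) with hG
    by_cases hGne : G.Nonempty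
    · have hlt' : h 0 i < G.min' hGne := (Finset.mem_filter.mp (G.min'_mem hGne)).2
      obtain ⟨x, hx1, hx2⟩ := exists_between hlt'
      refine ⟨x, hx1, ?_, ?_⟩
      · intro y hy hylt
        have hyG : y ∈ G := Finset.mem_filter.mpr ⟨hy, hylt⟩
        exact lt_of_lt_of_le hx2 (G.min'_le y hyG)
      · intro q heq
        rcases lt_trichotomy (h n q) (h 0 i) with hc | hc | hc
        · rw [heq] at hx1; exact absurd (lt_trans hx1 hc) (lt_irrefl _)
        · exact hP2 q hc
        · have hyG : h n q ∈ G := Finset.mem_filter.mpr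
            ⟨Finset.mem_union_right _ (Finset.mem_image_of_mem _ (Finset.mem_univ q)), hc⟩
          have := lt_of_lt_of_le hx2 (G.min'_le _ hyG)
          rw [← heq] at this
          exact absurd this (lt_irrefl _)
    · refine ⟨h 0 i + 1, by linarith, ?_, ?_⟩
      · intro y hy hylt
        exact absurd ⟨y, Finset.mem_filter.mpr ⟨hy, hylt⟩⟩ hGne
      · intro q heq
        rcases lt_trichotomy (h n q) (h 0 i) with hc | hc | hc
        · rw [← heq] at hc; linarith
        · exact hP2 q hc
        · exact hGne ⟨h n q, Finset.mem_filter.mpr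
            ⟨Finset.mem_union_right _ (Finset.mem_image_of_mem _ (Finset.mem_univ q)), hc⟩⟩
  obtain ⟨x, hx1, hx2, hx3⟩ := hxex
  set u' : Fin n → ℚ := Function.update (h 0) i x with hu'
  have hu'mono : StrictMono u' := by
    intro p q hpq
    rcases eq_or_ne p i with rfl | hp
    · rw [hu', Function.update_self, Function.update_of_ne (ne_of_gt hpq)]
      exact hx2 _ (Finset.mem_union_left _ (Finset.mem_image_of_mem _ (Finset.mem_univ q)))
        ((hmono 0) hpq)
    · rw [hu', Function.update_of_ne hp]
      rcases eq_or_ne q i with rfl | hq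
      · rw [Function.update_self]
        exact lt_trans ((hmono 0) hpq) hx1
      · rw [Function.update_of_ne hq]; exact (hmono 0) hpq
  have hisow : pairIso u' (h n) (h 0) (h n) := by
    intro p q
    rcases eq_or_ne p i with rfl | hp
    · rw [hu', Function.update_self]
      constructor
      · constructor
        · intro hxy; exact lt_trans hx1 hxy
        · intro hy; exact hx2 _ (Finset.mem_union_right _
            (Finset.mem_image_of_mem _ (Finset.mem_univ q))) hy
      · constructor
        · intro heq; exact absurd heq (hx3 q)
        · intro heq; exact absurd heq.symm (hP2 q)
    · rw [hu', Function.update_of_ne hp]; exact ⟨Iff.rfl, Iff.rfl⟩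
  set S : Finset ℚ := ((Finset.range (n+1)).biUnion (fun t => Finset.univ.image (h t))) ∪ {x}
    with hS
  obtain ⟨φ, hφX, hφord⟩ := embed S hX
  have hmemS : ∀ t, t ≤ n → ∀ p, h t p ∈ S := by
    intro t ht p
    rw [hS]
    apply Finset.mem_union_left
    exact Finset.mem_biUnion.mpr ⟨t, Finset.mem_range.mpr (by omega),
      Finset.mem_image_of_mem _ (Finset.mem_univ p)⟩
  have hxS : x ∈ S := Finset.mem_union_right _ (Finset.mem_singleton_self x)
  have hu'S : ∀ p, u' p ∈ S := by
    intro p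
    rcases eq_or_ne p i with rfl | hp
    · rw [hu', Function.update_self]; exact hxS
    · rw [hu', Function.update_of_ne hp]; exact hmemS 0 (by omega) p
  have hcomp : ∀ (f : Fin n → ℚ), (∀ p, f p ∈ S) → StrictMono f →
      StrictMono (fun p => φ (f p)) := by
    intro f hfS hf p q hpq
    exact ((hφord _ (hfS p) _ (hfS q)).1).mpr (hf hpq)
  have hcompX : ∀ (f : Fin n → ℚ), (∀ p, f p ∈ S) → ∀ p, φ (f p) ∈ X :=
    fun f hfS p => hφX _ (hfS p)
  have hcompiso : ∀ (f g : Fin n → ℚ), (∀ p, f p ∈ S) → (∀ p, g p ∈ S) →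
      pairIso f g a b → pairIso (fun p => φ (f p)) (fun p => φ (g p)) a b := by
    intro f g hfS hgS hig p q
    constructor
    · rw [(hφord _ (hfS p) _ (hgS q)).1]; exact (hig p q).1
    · rw [(hφord _ (hfS p) _ (hgS q)).2]; exact (hig p q).2
  have hchain : ∀ t, t ≤ n → c (img (fun p => φ (h 0 p))) = c (img (fun p => φ (h t p))) := by
    intro t
    induction t with
    | zero => intro _; rfl
    | succ t iht =>
      intro hte
      have h1 := iht (by omega)
      have h2 : c (img (fun p => φ (h t p))) = c (img (fun p => φ (h (t+1) p))) := by
        refine (hH _ _ a b (hcomp _ (hmemS t (by omega)) (hmono t))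
          (hcomp _ (hmemS (t+1) hte) (hmono (t+1))) ha hb
          (hcompX _ (hmemS t (by omega))) (hcompX _ (hmemS (t+1) hte)) haX hbX
          (hcompiso _ _ (hmemS t (by omega)) (hmemS (t+1) hte) (hiso t))).mpr hcab
      rw [h1, h2]
  have hce : c (img (fun p => φ (h 0 p))) = c (img (fun p => φ (h n p))) := hchain n (le_refl n)
  have hwig : c (img (fun p => φ (u' p))) = c (img (fun p => φ (h n p))) := by
    refine (hH _ _ (fun p => φ (h 0 p)) (fun p => φ (h n p))
      (hcomp _ hu'S hu'mono) (hcomp _ (hmemS n (le_refl n)) (hmono n))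
      (hcomp _ (hmemS 0 (by omega)) (hmono 0)) (hcomp _ (hmemS n (le_refl n)) (hmono n))
      (hcompX _ hu'S) (hcompX _ (hmemS n (le_refl n))) (hcompX _ (hmemS 0 (by omega)))
      (hcompX _ (hmemS n (le_refl n))) ?_).mpr hce
    intro p q
    constructor
    · rw [(hφord _ (hu'S p) _ (hmemS n (le_refl n) q)).1,
        (hφord _ (hmemS 0 (by omega) p) _ (hmemS n (le_refl n) q)).1]
      exact (hisow p q).1
    · rw [(hφord _ (hu'S p) _ (hmemS n (le_refl n) q)).2,
        (hφord _ (hmemS 0 (by omega) p) _ (hmemS n (le_refl n) q)).2]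
      exact (hisow p q).2
  refine ⟨fun p => φ (h 0 p), fun p => φ (u' p),
    hcomp _ (hmemS 0 (by omega)) (hmono 0), hcomp _ hu'S hu'mono,
    hcompX _ (hmemS 0 (by omega)), hcompX _ hu'S, ?_, ?_, by rw [hce, ← hwig]⟩
  · intro p hp
    show φ (h 0 p) = φ (u' p)
    have huu : u' p = h 0 p := by rw [hu', Function.update_of_ne hp]
    rw [huu]
  · show φ (h 0 i) < φ (u' i)
    rw [(hφord _ (hmemS 0 (by omega) i) _ (hu'S i)).1]
    rw [hu', Function.update_self]
    exact hx1

end ErdosRado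

/-- Erdős–Rado canonical theorem for `[ω]^n`. -/
theorem erdos_rado_canonical {R : Type*} (n : ℕ) (c : Finset ℕ → R) :
    ∃ X : Set ℕ, X.Infinite ∧ ∃ I : Finset (Fin n),
      ∀ (A B : Finset ℕ) (hA : A.card = n) (hB : B.card = n),
        (↑A : Set ℕ) ⊆ X → (↑B : Set ℕ) ⊆ X →
        (c A = c B ↔ ∀ i ∈ I, A.orderEmbOfFin hA i = B.orderEmbOfFin hB i) := by
  classical
  rcases Nat.eq_zero_or_pos n with rfl | hn
  · refine ⟨Set.univ, Set.infinite_univ, ∅, ?_⟩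
    intro A B hA hB _ _
    rw [Finset.card_eq_zero] at hA hB
    subst hA; subst hB
    simp
  · obtain ⟨X, hXinf, hH⟩ := ErdosRado.existsHomog n hn c
    refine ⟨X, hXinf, Finset.univ.filter (fun i => ¬ ErdosRado.free n c X i), ?_⟩
    intro A B hA hB hAX hBX
    have hfmono : StrictMono ⇑(A.orderEmbOfFin hA) := (A.orderEmbOfFin hA).strictMono
    have hgmono : StrictMono ⇑(B.orderEmbOfFin hB) := (B.orderEmbOfFin hB).strictMono
    have himgf : ErdosRado.img ⇑(A.orderEmbOfFin hA) = A := by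
      ext x
      rw [ErdosRado.mem_img]
      constructor
      · rintro ⟨p, rfl⟩; exact Finset.orderEmbOfFin_mem _ _ _
      · intro hx
        have hr : x ∈ Set.range ⇑(A.orderEmbOfFin hA) := by
          rw [Finset.range_orderEmbOfFin]; exact hx
        exact hr
    have himgg : ErdosRado.img ⇑(B.orderEmbOfFin hB) = B := by
      ext x
      rw [ErdosRado.mem_img]
      constructor
      · rintro ⟨p, rfl⟩; exact Finset.orderEmbOfFin_mem _ _ _
      · intro hx
        have hr : x ∈ Set.range ⇑(B.orderEmbOfFin hB) := by
          rw [Finset.range_orderEmbOfFin]; exact hx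
        exact hr
    have hfX : ∀ p, A.orderEmbOfFin hA p ∈ X :=
      fun p => hAX (Finset.mem_coe.mpr (Finset.orderEmbOfFin_mem _ _ _))
    have hgX : ∀ p, B.orderEmbOfFin hB p ∈ X :=
      fun p => hBX (Finset.mem_coe.mpr (Finset.orderEmbOfFin_mem _ _ _))
    constructor
    · intro hcAB i hiI
      rw [Finset.mem_filter] at hiI
      by_contra hne
      have hc' : c (ErdosRado.img ⇑(A.orderEmbOfFin hA)) = c (ErdosRado.img ⇑(B.orderEmbOfFin hB)) := by
        rw [himgf, himgg]; exact hcAB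
      rcases lt_or_gt_of_ne hne with hlt | hlt
      · exact hiI.2 (ErdosRado.lemB hH hXinf hn _ _ hfmono hgmono hfX hgX hc' i hlt)
      · exact hiI.2 (ErdosRado.lemB hH hXinf hn _ _ hgmono hfmono hgX hfX hc'.symm i hlt)
    · intro hagree
      have hres := ErdosRado.lemA hH _ _ _ hfmono hgmono hfX hgX
        (fun i hi => hagree i (Finset.mem_filter.mpr ⟨Finset.mem_univ _, hi⟩)) rfl
      rw [himgf, himgg] at hres
      exact hres
end

section
/- The canonization of colorings of 1-element strong subtrees: for any coloring c of the nodes of an infinite b-branching tree U (into an arbitrary set), there is an infinite strong subtree T of U such that c restricted to the nodes of T is constant, one-to-one, or satisfies c(s) = c(t) iff s and t have the same height. -/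
/-- `l'` is the immediate successor of `l` in the level set `L`. -/
def NextLvl (L : Set ℕ) (l l' : ℕ) : Prop :=
  l ∈ L ∧ l' ∈ L ∧ l < l' ∧ ∀ m ∈ L, m ≤ l ∨ l' ≤ m

/-- `S` is a strong subtree of the complete `b`-branching tree `b^{<ω}` (nodes being
lists over `Fin b`, ordered by the prefix relation) with level set `L`:
all nodes of `S` lie on the levels in `L`, each level of `L` is attained, there is a
unique root (node at the least level), every node has, for each direction `i : Fin b`,
exactly one successor at the next level extending it in direction `i`, and every node
at a non-minimal level comes from a node at the previous level in this way. -/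
def IsStrongSub (b : ℕ) (S : Set (List (Fin b))) (L : Set ℕ) : Prop :=
  (∀ s ∈ S, s.length ∈ L) ∧
  (∀ l ∈ L, ∃ s ∈ S, s.length = l) ∧
  (∀ s ∈ S, ∀ t ∈ S, IsLeast L s.length → IsLeast L t.length → s = t) ∧
  (∀ s ∈ S, ∀ l' : ℕ, NextLvl L s.length l' → ∀ i : Fin b,
      ∃! t : List (Fin b), t ∈ S ∧ t.length = l' ∧ s ++ [i] <+: t) ∧
  (∀ t ∈ S, ∀ l : ℕ, NextLvl L l t.length →
      ∃ s ∈ S, ∃ i : Fin b, s.length = l ∧ s ++ [i] <+: t)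

namespace Canon

open List Classical

variable {b : ℕ} {R : Type*}

/-- A strong embedding of the full `b`-branching tree into itself. -/
def Emb (b : ℕ) (f : List (Fin b) → List (Fin b)) (g : ℕ → ℕ) : Prop :=
  StrictMono g ∧ (∀ s, (f s).length = g s.length) ∧
    ∀ (s : List (Fin b)) (i : Fin b), f s ++ [i] <+: f (s ++ [i])

theorem Emb.mono {f g} (hf : Emb b f g) :
    ∀ {s t : List (Fin b)}, s <+: t → f s <+: f t := by
  intro s t h
  induction t using List.reverseRecOn with
  | nil =>
    have : s = [] := prefix_nil.mp h
    simp [this]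
  | append_singleton t' i IH =>
    rcases Nat.lt_or_ge s.length (t' ++ [i]).length with hl | hl
    · have hst' : s <+: t' := by
        refine List.prefix_of_prefix_length_le h (List.prefix_append t' [i]) ?_
        simpa using Nat.lt_succ_iff.mp (by simpa using hl)
      exact (IH hst').trans ((List.prefix_append _ _).trans (hf.2.2 t' i))
    · have : s = t' ++ [i] := h.eq_of_length (le_antisymm h.length_le hl)
      simp [this]

theorem Emb.step {f g} (hf : Emb b f g) {s t : List (Fin b)} {i : Fin b}
    (h : s ++ [i] <+: t) : f s ++ [i] <+: f t :=
  (hf.2.2 s i).trans (hf.mono h)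

theorem Emb.inj {f g} (hf : Emb b f g) : Function.Injective f := by
  have main : ∀ n (s t : List (Fin b)), s.length ≤ n → f s = f t → s = t := by
    intro n
    induction n with
    | zero =>
      intro s t hs hst
      have hlen : s.length = t.length := by
        have := hf.2.1 s
        rw [hst, hf.2.1 t] at this
        exact hf.1.injective this.symm
      have hs0 : s = [] := List.length_eq_zero_iff.mp (Nat.le_zero.mp hs)
      have ht0 : t = [] := List.length_eq_zero_iff.mp (by omega)
      rw [hs0, ht0]
    | succ n IH =>
      intro s t hs hst
      have hlen : s.length = t.length := by
        have := hf.2.1 s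
        rw [hst, hf.2.1 t] at this
        exact hf.1.injective this.symm
      rcases Nat.eq_or_lt_of_le hs with h1 | h1
      swap
      · exact IH s t (Nat.lt_succ_iff.mp h1) hst
      by_cases hsnil : s = []
      · rw [hsnil]
        have : t.length = 0 := by rw [← hlen, hsnil]; rfl
        exact (List.length_eq_zero_iff.mp this).symm
      have htnil : t ≠ [] := by
        intro h; rw [h] at hlen; simp at hlen; exact hsnil hlen
      obtain ⟨s', i, rfl⟩ : ∃ s' i, s = s' ++ [i] :=
        ⟨s.dropLast, s.getLast hsnil, (List.dropLast_append_getLast hsnil).symm⟩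
      obtain ⟨t', j, rfl⟩ : ∃ t' j, t = t' ++ [j] :=
        ⟨t.dropLast, t.getLast htnil, (List.dropLast_append_getLast htnil).symm⟩
      have hp1 : f s' ++ [i] <+: f (t' ++ [j]) := hst ▸ hf.2.2 s' i
      have hp2 : f t' ++ [j] <+: f (t' ++ [j]) := hf.2.2 t' j
      have hlen' : s'.length = t'.length := by simpa using hlen
      have hfl : (f s' ++ [i]).length = (f t' ++ [j]).length := by
        simp [hf.2.1, hlen']
      have heq : f s' ++ [i] = f t' ++ [j] :=
        (List.prefix_of_prefix_length_le hp1 hp2 (le_of_eq hfl)).eq_of_length hfl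
      obtain ⟨hfe, hij⟩ := List.append_inj heq (by simp [hf.2.1, hlen'])
      have hs'len : s'.length ≤ n := by
        have : s'.length + 1 = n + 1 := by simpa using h1
        omega
      rw [IH s' t' hs'len hfe, List.singleton_inj.mp hij]
  intro s t hst
  exact main s.length s t le_rfl hst


theorem Emb.comp {f g f' g'} (hf : Emb b f g) (hf' : Emb b f' g') :
    Emb b (fun s => f (f' s)) (fun k => g (g' k)) := by
  refine ⟨hf.1.comp hf'.1, fun s => by rw [hf.2.1, hf'.2.1], fun s i => ?_⟩
  exact hf.step (hf'.2.2 s i)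

theorem prefix_eq_of_length {u v w : List (Fin b)} (hu : u <+: w) (hv : v <+: w)
    (h : u.length = v.length) : u = v :=
  (List.prefix_of_prefix_length_le hu hv (le_of_eq h)).eq_of_length h

/-- The image of a strong embedding is a strong subtree. -/
theorem Emb.strongSub {f g} (hb : 0 < b) (hf : Emb b f g) :
    IsStrongSub b (Set.range f) (Set.range g) := by
  have hlen : ∀ s, (f s).length = g s.length := hf.2.1
  refine ⟨?_, ?_, ?_, ?_, ?_⟩
  · rintro s ⟨u, rfl⟩
    exact ⟨u.length, (hlen u).symm⟩
  · rintro l ⟨k, rfl⟩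
    exact ⟨f (List.replicate k ⟨0, hb⟩), ⟨_, rfl⟩, by simp [hlen]⟩
  · rintro s ⟨u, rfl⟩ t ⟨v, rfl⟩ hs ht
    have hu : u = [] := by
      have h0 : g 0 ∈ Set.range g := ⟨0, rfl⟩
      have := hs.2 h0
      rw [hlen] at this
      have : u.length ≤ 0 := by
        by_contra hc
        exact absurd (hf.1 (by omega : 0 < u.length)) (by omega)
      exact List.length_eq_zero_iff.mp (Nat.le_zero.mp this)
    have hv : v = [] := by
      have h0 : g 0 ∈ Set.range g := ⟨0, rfl⟩
      have := ht.2 h0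
      rw [hlen] at this
      have : v.length ≤ 0 := by
        by_contra hc
        exact absurd (hf.1 (by omega : 0 < v.length)) (by omega)
      exact List.length_eq_zero_iff.mp (Nat.le_zero.mp this)
    rw [hu, hv]
  · rintro s ⟨u, rfl⟩ l' hnl i
    have hl' : l' = g (u.length + 1) := by
      obtain ⟨h1, ⟨n, rfl⟩, h3, h4⟩ := hnl
      rw [hlen] at h3
      have hn : u.length < n := hf.1.lt_iff_lt.mp h3
      have h5 := h4 (g (u.length + 1)) ⟨_, rfl⟩
      rw [hlen] at h5
      rcases h5 with h5 | h5
      · exact absurd (hf.1.le_iff_le.mp h5) (by omega)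
      · exact le_antisymm h5 (hf.1.le_iff_le.mpr (by omega))
    refine ⟨f (u ++ [i]), ⟨⟨_, rfl⟩, by simp [hlen, hl'], hf.2.2 u i⟩, ?_⟩
    rintro t ⟨⟨w, rfl⟩, hwl, hwp⟩
    have hwlen : w.length = u.length + 1 := by
      rw [hlen, hl'] at hwl
      exact hf.1.injective hwl
    have hwnil : w ≠ [] := by
      intro h; rw [h] at hwlen; simp at hwlen
    obtain ⟨w', j, rfl⟩ : ∃ w' j, w = w' ++ [j] :=
      ⟨w.dropLast, w.getLast hwnil, (List.dropLast_append_getLast hwnil).symm⟩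
    have hw'len : w'.length = u.length := by simpa using hwlen
    have hp2 : f w' ++ [j] <+: f (w' ++ [j]) := hf.2.2 w' j
    have heq : f u ++ [i] = f w' ++ [j] :=
      prefix_eq_of_length hwp hp2 (by simp [hlen, hw'len])
    obtain ⟨hfe, hij⟩ := List.append_inj heq (by simp [hlen, hw'len])
    rw [hf.inj hfe, List.singleton_inj.mp hij]
  · rintro t ⟨w, rfl⟩ l hnl
    have hwpos : 0 < w.length := by
      obtain ⟨⟨n, rfl⟩, h2, h3, h4⟩ := hnl
      rw [hlen] at h3
      by_contra hc
      have : w.length = 0 := by omega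
      exact absurd (hf.1.lt_iff_lt.mp h3) (by omega)
    have hwnil : w ≠ [] := by intro h; rw [h] at hwpos; simp at hwpos
    have hl : l = g (w.length - 1) := by
      obtain ⟨⟨n, rfl⟩, h2, h3, h4⟩ := hnl
      rw [hlen] at h3
      have hn : n < w.length := hf.1.lt_iff_lt.mp h3
      have h5 := h4 (g (w.length - 1)) ⟨_, rfl⟩
      rw [hlen] at h5
      rcases h5 with h5 | h5
      · exact (le_antisymm h5 (hf.1.le_iff_le.mpr (by omega))).symm
      · exact absurd (hf.1.le_iff_le.mp h5) (by omega)
    refine ⟨f w.dropLast, ⟨_, rfl⟩, w.getLast hwnil, by simp [hlen, hl], ?_⟩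
    have := hf.2.2 w.dropLast (w.getLast hwnil)
    rwa [List.dropLast_append_getLast hwnil] at this

/-- General fusion theorem: build an embedding level by level. -/
theorem fusion (G : ℕ → (ℕ → ℕ × (List (Fin b) → List (Fin b))) → Prop)
    (Gdep : ∀ k H H', (∀ j, j ≤ k → H j = H' j) → G k H → G k H')
    (base : ∃ ch, G 0 (fun _ => ch))
    (step : ∀ k H, G k H → ∃ ch, (H k).1 < ch.1 ∧
        (∀ (s : List (Fin b)) (i : Fin b), s.length = k →
          (H k).2 s ++ [i] <+: ch.2 (s ++ [i])) ∧
        G (k + 1) (Function.update H (k + 1) ch)) :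
    ∃ H, (∀ k, G k H) ∧ (∀ k, (H k).1 < (H (k + 1)).1) ∧
      (∀ k (s : List (Fin b)) (i : Fin b), s.length = k →
        (H k).2 s ++ [i] <+: (H (k + 1)).2 (s ++ [i])) := by
  classical
  let St : ℕ → (ℕ → ℕ × (List (Fin b) → List (Fin b))) := fun k =>
    Nat.rec (fun _ => Classical.choose base)
      (fun k Hk => if h : G k Hk then
          Function.update Hk (k + 1) (Classical.choose (step k Hk h))
        else Hk) k
  have hG : ∀ k, G k (St k) := by
    intro k
    induction k with
    | zero => exact Classical.choose_spec base
    | succ k IH =>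
      show G (k + 1) (if h : G k (St k) then _ else _)
      rw [dif_pos IH]
      exact (Classical.choose_spec (step k (St k) IH)).2.2
  have hSt : ∀ k, St (k + 1) = Function.update (St k) (k + 1)
      (Classical.choose (step k (St k) (hG k))) := by
    intro k
    show (if h : G k (St k) then _ else _) = _
    rw [dif_pos (hG k)]
  have stab : ∀ k j, j ≤ k → St k j = St j j := by
    intro k
    induction k with
    | zero => intro j hj; rw [Nat.le_zero.mp hj]
    | succ k IH =>
      intro j hj
      rcases Nat.eq_or_lt_of_le hj with h | h
      · rw [h]
      · rw [hSt k, Function.update_of_ne (by omega), IH j (by omega)]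
  refine ⟨fun k => St k k, fun k => Gdep k (St k) _ (fun j hj => stab k j hj) (hG k),
    fun k => ?_, fun k s i hs => ?_⟩
  · have h1 := (Classical.choose_spec (step k (St k) (hG k))).1
    show (St k k).1 < (St (k + 1) (k + 1)).1
    rw [hSt k, Function.update_self]
    exact h1
  · have h2 := (Classical.choose_spec (step k (St k) (hG k))).2.1 s i hs
    show (St k k).2 s ++ [i] <+: (St (k + 1) (k + 1)).2 (s ++ [i])
    rw [hSt k, Function.update_self]
    exact h2

theorem emb_of_H (H : ℕ → ℕ × (List (Fin b) → List (Fin b)))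
    (hmono : ∀ k, (H k).1 < (H (k + 1)).1)
    (hcomp : ∀ k (s : List (Fin b)) (i : Fin b), s.length = k →
      (H k).2 s ++ [i] <+: (H (k + 1)).2 (s ++ [i]))
    (hlen : ∀ k (s : List (Fin b)), s.length = k → ((H k).2 s).length = (H k).1) :
    Emb b (fun s => (H s.length).2 s) (fun k => (H k).1) := by
  refine ⟨strictMono_nat_of_lt_succ hmono, fun s => hlen _ s rfl, fun s i => ?_⟩
  have := hcomp s.length s i rfl
  simpa using this


/-! ### Finite sets of extensions and colors -/

def listsLen (b n : ℕ) : Finset (List (Fin b)) :=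
  (Finset.univ : Finset (Fin n → Fin b)).image List.ofFn

theorem mem_listsLen {n : ℕ} {s : List (Fin b)} : s ∈ listsLen b n ↔ s.length = n := by
  constructor
  · intro h
    simp only [listsLen, Finset.mem_image] at h
    obtain ⟨w, -, rfl⟩ := h
    simp
  · rintro rfl
    exact Finset.mem_image.mpr ⟨s.get, Finset.mem_univ _, List.ofFn_get s⟩

theorem card_listsLen (n : ℕ) : (listsLen b n).card = b ^ n := by
  rw [listsLen, Finset.card_image_of_injective _ (fun x y h => List.ofFn_inj.mp h)]
  simp [Fintype.card_fun]

def extsFin (z : List (Fin b)) (m : ℕ) : Finset (List (Fin b)) :=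
  (listsLen b (m - z.length)).image (fun w => z ++ w)

theorem mem_extsFin {z x : List (Fin b)} {m : ℕ} (h : z.length ≤ m) :
    x ∈ extsFin z m ↔ z <+: x ∧ x.length = m := by
  constructor
  · intro hx
    simp only [extsFin, Finset.mem_image] at hx
    obtain ⟨w, hw, rfl⟩ := hx
    exact ⟨List.prefix_append z w, by simp [mem_listsLen.mp hw]; omega⟩
  · rintro ⟨⟨w, rfl⟩, hlen⟩
    refine Finset.mem_image.mpr ⟨w, mem_listsLen.mpr ?_, rfl⟩
    simp at hlen; omega

theorem card_extsFin (z : List (Fin b)) (m : ℕ) :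
    (extsFin z m).card = b ^ (m - z.length) := by
  rw [extsFin, Finset.card_image_of_injective _ (fun x y h => by simpa using h)]
  exact card_listsLen _

theorem extsFin_nonempty (hb : 0 < b) {z : List (Fin b)} {m : ℕ} (h : z.length ≤ m) :
    (extsFin z m).Nonempty := by
  refine ⟨z ++ List.replicate (m - z.length) ⟨0, hb⟩, (mem_extsFin h).mpr ?_⟩
  exact ⟨List.prefix_append _ _, by simp; omega⟩

theorem extsFin_mono {z x : List (Fin b)} {m : ℕ} (hzx : z <+: x) (hx : x.length ≤ m) :
    extsFin x m ⊆ extsFin z m := by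
  intro y hy
  obtain ⟨h1, h2⟩ := (mem_extsFin hx).mp hy
  exact (mem_extsFin (hzx.length_le.trans hx)).mpr ⟨hzx.trans h1, h2⟩

noncomputable def colorsAbove (c₂ : List (Fin b) → R) (z : List (Fin b)) (m : ℕ) : Finset R :=
  @Finset.image _ _ (Classical.decEq R) c₂ (extsFin z m)

theorem mem_colorsAbove {c₂ : List (Fin b) → R} {z : List (Fin b)} {m : ℕ} {r : R} :
    r ∈ colorsAbove c₂ z m ↔ ∃ x ∈ extsFin z m, c₂ x = r := by
  classical
  simp [colorsAbove]

theorem colorsAbove_nonempty (hb : 0 < b) {c₂ : List (Fin b) → R} {z : List (Fin b)} {m : ℕ}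
    (h : z.length ≤ m) : (colorsAbove c₂ z m).Nonempty :=
  (extsFin_nonempty hb h).image _

theorem colorsAbove_mono {c₂ : List (Fin b) → R} {z x : List (Fin b)} {m : ℕ}
    (hzx : z <+: x) (hx : x.length ≤ m) : colorsAbove c₂ x m ⊆ colorsAbove c₂ z m := by
  classical
  intro r hr
  rw [mem_colorsAbove] at hr ⊢
  obtain ⟨y, hy, rfl⟩ := hr
  exact ⟨y, extsFin_mono hzx hx hy, rfl⟩

/-! ### The levelish dichotomy -/

/-- Levels `m` at which all extensions (at a given level `l`) of `t` admit a common color. -/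
def CommonSet (c₂ : List (Fin b) → R) (t : List (Fin b)) (l : ℕ) : Set ℕ :=
  {m | ∃ r, ∀ x : List (Fin b), t <+: x → x.length = l →
      ∃ y, x <+: y ∧ y.length = m ∧ c₂ y = r}

/-- `t` is levelish: at every level, common colors can be found at infinitely many heights. -/
def LV (c₂ : List (Fin b) → R) (t : List (Fin b)) : Prop :=
  ∀ l, (CommonSet c₂ t l).Infinite

theorem exists_infinite_fiber {A : Type*} [Finite A] (F : ℕ → A) (S : Set ℕ)
    (hS : S.Infinite) : ∃ a, {m | m ∈ S ∧ F m = a}.Infinite := by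
  by_contra h
  push_neg at h
  have : S ⊆ ⋃ a ∈ (Set.univ : Set A), {m | m ∈ S ∧ F m = a} := by
    intro m hm; simp [hm]
  exact absurd (hS.mono this) (by
    simp only [Set.not_infinite]
    exact (Set.Finite.biUnion Set.finite_univ (fun a _ => h a)).subset
      (le_refl _))

/-- If above some node the number of colors per level is bounded along infinitely many
levels, then some extension of that node is levelish. -/
theorem bounded_color (hb : 0 < b) (c₂ : List (Fin b) → R) (z : List (Fin b)) (C : ℕ)
    (M : Set ℕ) (hM : M.Infinite)
    (hC : ∀ m ∈ M, z.length < m → (colorsAbove c₂ z m).card ≤ C) :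
    ∃ t, z <+: t ∧ LV c₂ t := by
  classical
  have hex : ∃ n, ∃ t, z <+: t ∧
      {m | t.length < m ∧ (colorsAbove c₂ t m).card ≤ n}.Infinite := by
    refine ⟨C, z, List.prefix_refl z, ?_⟩
    have h1 : (M \ Set.Iic z.length).Infinite := hM.diff (Set.finite_Iic _)
    refine h1.mono ?_
    rintro m ⟨hm1, hm2⟩
    simp only [Set.mem_Iic, not_le] at hm2
    exact ⟨hm2, hC m hm1 hm2⟩
  set n₀ := Nat.find hex with hn₀
  obtain ⟨t₀, hzt₀, hM₀⟩ := Nat.find_spec hex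
  set M₀ : Set ℕ := {m | t₀.length < m ∧ (colorsAbove c₂ t₀ m).card ≤ n₀} with hM₀def
  have hn₀pos : 0 < n₀ := by
    by_contra hc
    have h0 : n₀ = 0 := by omega
    obtain ⟨m, hm⟩ := hM₀.nonempty
    have hne := colorsAbove_nonempty hb (c₂ := c₂) (z := t₀) (le_of_lt hm.1)
    have := hm.2
    rw [h0] at this
    rw [Finset.card_eq_zero.mp (Nat.le_zero.mp this)] at hne
    exact absurd hne (by simp)
  have key : ∀ x, t₀ <+: x →
      {m | m ∈ M₀ ∧ x.length < m ∧ colorsAbove c₂ x m ≠ colorsAbove c₂ t₀ m}.Finite := by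
    intro x hx
    by_contra hinf
    rw [← Set.not_infinite, not_not] at hinf
    have hP : ∃ t, z <+: t ∧
        {m | t.length < m ∧ (colorsAbove c₂ t m).card ≤ n₀ - 1}.Infinite := by
      refine ⟨x, hzt₀.trans hx, hinf.mono ?_⟩
      rintro m ⟨hm1, hm2, hm3⟩
      refine ⟨hm2, ?_⟩
      have hsub : colorsAbove c₂ x m ⊆ colorsAbove c₂ t₀ m :=
        colorsAbove_mono hx (le_of_lt hm2)
      have hss : colorsAbove c₂ x m ⊂ colorsAbove c₂ t₀ m :=
        ⟨hsub, fun h => hm3 (subset_antisymm hsub h)⟩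
      have h1 := Finset.card_lt_card hss
      have h2 := hm1.2
      omega
    exact absurd hP (Nat.find_min hex (by omega))
  refine ⟨t₀, hzt₀, ?_⟩
  intro l
  rcases lt_or_ge l t₀.length with hl | hl
  · have huniv : CommonSet c₂ t₀ l = Set.univ := by
      ext m
      simp only [CommonSet, Set.mem_setOf_eq, Set.mem_univ, iff_true]
      exact ⟨c₂ [], fun x hx1 hx2 => absurd hx1.length_le (by omega)⟩
    rw [huniv]; exact Set.infinite_univ
  · set X := extsFin t₀ l with hX
    set Bad : Set ℕ := ⋃ x ∈ (X : Set (List (Fin b))),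
      {m | m ∈ M₀ ∧ x.length < m ∧ colorsAbove c₂ x m ≠ colorsAbove c₂ t₀ m} with hBadDef
    have hBad : Bad.Finite :=
      Set.Finite.biUnion X.finite_toSet
        (fun x hx => key x ((mem_extsFin hl).mp (Finset.mem_coe.mp hx)).1)
    have hInf : (M₀ \ (Set.Iic l ∪ Bad)).Infinite :=
      hM₀.diff ((Set.finite_Iic l).union hBad)
    refine hInf.mono ?_
    rintro m ⟨hm1, hm2⟩
    simp only [Set.mem_union, not_or, Set.mem_Iic, not_le] at hm2
    obtain ⟨hml, hmBad⟩ := hm2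
    obtain ⟨r, hr⟩ := colorsAbove_nonempty hb (c₂ := c₂) (z := t₀) (le_of_lt hm1.1)
    refine ⟨r, fun x hx1 hx2 => ?_⟩
    have hxX : x ∈ X := (mem_extsFin hl).mpr ⟨hx1, hx2⟩
    have heq : colorsAbove c₂ x m = colorsAbove c₂ t₀ m := by
      by_contra hne
      refine hmBad ?_
      rw [hBadDef]
      refine Set.mem_biUnion (Finset.mem_coe.mpr hxX) ?_
      exact ⟨hm1, by omega, hne⟩
    have hrx : r ∈ colorsAbove c₂ x m := heq ▸ hr
    obtain ⟨y, hy, hyr⟩ := mem_colorsAbove.mp hrx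
    obtain ⟨hy1, hy2⟩ := (mem_extsFin (by omega)).mp hy
    exact ⟨y, hy1, hy2, hyr⟩

set_option maxHeartbeats 1000000 in
/-- If no node is levelish, then any finite set of nodes admits, at arbitrarily high
levels, extensions with pairwise distinct colors. -/
theorem rainbow_stage (hb : 0 < b) (c₂ : List (Fin b) → R) (hB : ∀ t, ¬ LV c₂ t)
    (Z : Finset (List (Fin b))) (bound : ℕ) (hlen : ∀ z ∈ Z, z.length ≤ bound) :
    ∃ m, bound < m ∧ ∃ y : List (Fin b) → List (Fin b),
      (∀ z ∈ Z, z <+: y z ∧ (y z).length = m) ∧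
      (∀ z ∈ Z, ∀ z' ∈ Z, c₂ (y z) = c₂ (y z') → z = z') := by
  classical
  by_contra hcon
  push_neg at hcon
  have hH : ∀ m, bound < m → ∃ A : Finset ↥Z,
      (A.biUnion (fun zz => colorsAbove c₂ zz.1 m)).card < A.card := by
    intro m hm
    by_contra h
    push_neg at h
    obtain ⟨f, hfinj, hfmem⟩ :=
      (Finset.all_card_le_biUnion_card_iff_exists_injective
        (fun zz : ↥Z => colorsAbove c₂ zz.1 m)).mp h
    have hyex : ∀ zz : ↥Z, ∃ x, zz.1 <+: x ∧ x.length = m ∧ c₂ x = f zz := by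
      intro zz
      obtain ⟨x, hx, hcx⟩ := mem_colorsAbove.mp (hfmem zz)
      obtain ⟨h1, h2⟩ :=
        (mem_extsFin (le_of_lt (lt_of_le_of_lt (hlen zz.1 zz.2) hm))).mp hx
      exact ⟨x, h1, h2, hcx⟩
    choose φ hφ1 hφ2 hφ3 using hyex
    have h1 : ∀ z ∈ Z, z <+: (fun z => if h : z ∈ Z then φ ⟨z, h⟩ else []) z ∧
        ((fun z => if h : z ∈ Z then φ ⟨z, h⟩ else []) z).length = m := by
      intro z hz
      simp only [dif_pos hz]
      exact ⟨hφ1 ⟨z, hz⟩, hφ2 ⟨z, hz⟩⟩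
    have h2 : ∀ z ∈ Z, ∀ z' ∈ Z,
        c₂ ((fun z => if h : z ∈ Z then φ ⟨z, h⟩ else []) z) =
          c₂ ((fun z => if h : z ∈ Z then φ ⟨z, h⟩ else []) z') → z = z' := by
      intro z hz z' hz' hcc
      simp only [dif_pos hz, dif_pos hz'] at hcc
      rw [hφ3 ⟨z, hz⟩, hφ3 ⟨z', hz'⟩] at hcc
      exact Subtype.ext_iff.mp (hfinj hcc)
    obtain ⟨z, hz, z', hz', hcc, hne⟩ := hcon m hm _ h1
    exact hne (h2 z hz z' hz' hcc)
  set F : ℕ → Finset ↥Z := fun m =>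
    if h : bound < m then Classical.choose (hH m h) else ∅ with hF
  obtain ⟨A₀, hA₀⟩ := exists_infinite_fiber F (Set.Ioi bound) (Set.Ioi_infinite bound)
  have hA₀spec : ∀ m, m ∈ Set.Ioi bound → F m = A₀ →
      (A₀.biUnion (fun zz => colorsAbove c₂ zz.1 m)).card < A₀.card := by
    intro m hm hFm
    have hm' : bound < m := hm
    have hspec := Classical.choose_spec (hH m hm')
    have hFm' : (if h : bound < m then Classical.choose (hH m h) else ∅) = A₀ := hFm
    rw [dif_pos hm'] at hFm'
    rwa [hFm'] at hspec
  obtain ⟨m₁, hm₁⟩ := hA₀.nonempty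
  have hA₀ne : A₀.Nonempty := by
    rw [← Finset.card_pos]
    have := hA₀spec m₁ hm₁.1 hm₁.2
    omega
  obtain ⟨z₀, hz₀⟩ := hA₀ne
  have hCbound : ∀ m ∈ {m | m ∈ Set.Ioi bound ∧ F m = A₀}, z₀.1.length < m →
      (colorsAbove c₂ z₀.1 m).card ≤ Z.card := by
    rintro m ⟨hm1, hm2⟩ _
    have h1 := hA₀spec m hm1 hm2
    have h2 : colorsAbove c₂ z₀.1 m ⊆ A₀.biUnion (fun zz => colorsAbove c₂ zz.1 m) := by
      intro r hr
      exact Finset.mem_biUnion.mpr ⟨z₀, hz₀, hr⟩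
    have h3 := Finset.card_le_card h2
    have h4 : A₀.card ≤ Z.card := by
      have := Finset.card_le_univ A₀
      rwa [Fintype.card_coe] at this
    omega
  obtain ⟨t, -, hLV⟩ := bounded_color hb c₂ z₀.1 Z.card _ hA₀ hCbound
  exact hB t hLV


theorem decomp {k : ℕ} {v : List (Fin b)} (hv : v.length = k + 1) (d : Fin b) :
    v.dropLast ++ [v.getLastD d] = v := by
  induction v using List.reverseRecOn with
  | nil => simp at hv
  | append_singleton w a _ => simp

/-- Fusion with an invariant depending only on the current chunk. -/
theorem fusionQ (Q : ℕ → ℕ × (List (Fin b) → List (Fin b)) → Prop)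
    (base : ∃ ch, Q 0 ch)
    (step : ∀ k ch, Q k ch → ∃ ch', ch.1 < ch'.1 ∧
        (∀ (s : List (Fin b)) (i : Fin b), s.length = k →
          ch.2 s ++ [i] <+: ch'.2 (s ++ [i])) ∧ Q (k + 1) ch') :
    ∃ H : ℕ → ℕ × (List (Fin b) → List (Fin b)),
      (∀ k, Q k (H k)) ∧ (∀ k, (H k).1 < (H (k + 1)).1) ∧
      (∀ k (s : List (Fin b)) (i : Fin b), s.length = k →
        (H k).2 s ++ [i] <+: (H (k + 1)).2 (s ++ [i])) := by
  have main := fusion (b := b) (fun k H => Q k (H k))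
    (fun k H H' hj h => by
      show Q k (H' k)
      rw [← hj k le_rfl]
      exact h)
    (by obtain ⟨ch, hch⟩ := base; exact ⟨ch, hch⟩)
    (by
      intro k H hGk
      obtain ⟨ch', h1, h2, h3⟩ := step k (H k) hGk
      refine ⟨ch', h1, h2, ?_⟩
      show Q (k + 1) (Function.update H (k + 1) ch' (k + 1))
      rwa [Function.update_self])
  exact main

/-- Padding embedding realizing a prescribed level function. -/
theorem pad (hb : 0 < b) {μ : ℕ → ℕ} (hμ : StrictMono μ) :
    ∃ p, Emb b p μ := by
  classical
  obtain ⟨H, hGall, hmono, hcomp⟩ := fusionQ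
    (fun k ch => ch.1 = μ k ∧ ∀ s : List (Fin b), s.length = k →
      (ch.2 s).length = ch.1)
    (⟨(μ 0, fun _ => List.replicate (μ 0) ⟨0, hb⟩), rfl, fun s _ => by simp⟩)
    (by
      intro k ch hch
      obtain ⟨hlv, hlen⟩ := hch
      have hlt : μ k < μ (k + 1) := hμ (Nat.lt_succ_self k)
      refine ⟨(μ (k + 1), fun v => ch.2 v.dropLast ++
          v.getLastD ⟨0, hb⟩ :: List.replicate (μ (k + 1) - μ k - 1) ⟨0, hb⟩), ?_, ?_, ?_, ?_⟩
      · rw [hlv]; exact hlt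
      · intro s i hs
        have h1 : (s ++ [i]).dropLast = s := List.dropLast_concat
        have h2 : (s ++ [i]).getLastD (⟨0, hb⟩ : Fin b) = i := by simp
        simp only [h1, h2]
        exact ⟨List.replicate (μ (k + 1) - μ k - 1) ⟨0, hb⟩, by simp⟩
      · rfl
      · intro s hs
        have hdl : s.dropLast.length = k := by
          rw [List.length_dropLast, hs]
          omega
        simp only [List.length_append, List.length_cons, List.length_replicate]
        rw [hlen s.dropLast hdl, hlv]
        omega)
  have hE := emb_of_H H hmono hcomp (fun k s hs => ((hGall k).2 s hs))
  have hg : (fun k => (H k).1) = μ := funext (fun k => (hGall k).1)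
  rw [hg] at hE
  exact ⟨_, hE⟩

/-- One-dimensional canonical Ramsey theorem. -/
theorem nat_canonical {R' : Type*} (h : ℕ → R') :
    ∃ μ : ℕ → ℕ, StrictMono μ ∧
      ((∀ j k, h (μ j) = h (μ k)) ∨ (∀ j k, h (μ j) = h (μ k) → j = k)) := by
  classical
  by_cases hc : ∃ r, {n | h n = r}.Infinite
  · obtain ⟨r, hr⟩ := hc
    have step : ∀ x : ℕ, ∃ y, y ∈ {n | h n = r} ∧ x < y := fun x => hr.exists_gt x
    set μ : ℕ → ℕ := fun n =>
      Nat.rec (Classical.choose (step 0)) (fun _ x => Classical.choose (step x)) n with hμ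
    have hsucc : ∀ n, μ (n + 1) = Classical.choose (step (μ n)) := fun n => rfl
    have hmem : ∀ n, h (μ n) = r := by
      intro n
      cases n with
      | zero => exact (Classical.choose_spec (step 0)).1
      | succ n => rw [hsucc n]; exact (Classical.choose_spec (step (μ n))).1
    refine ⟨μ, strictMono_nat_of_lt_succ (fun n => ?_), Or.inl (fun j k => by
      rw [hmem j, hmem k])⟩
    rw [hsucc n]
    exact (Classical.choose_spec (step (μ n))).2
  · push_neg at hc
    have hfib : ∀ r, {n | h n = r}.Finite := fun r => hc r
    have step : ∀ x : ℕ, ∃ y, x < y ∧ h y ∉ h '' Set.Iic x := by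
      intro x
      have hfin : {n | h n ∈ h '' Set.Iic x}.Finite := by
        have hsub : {n | h n ∈ h '' Set.Iic x} ⊆ ⋃ y ∈ Set.Iic x, {n | h n = h y} := by
          intro n hn
          obtain ⟨y, hy, he⟩ := hn
          exact Set.mem_biUnion hy he.symm
        exact ((Set.finite_Iic x).biUnion (fun y _ => hfib (h y))).subset hsub
      obtain ⟨y, hy, hlt⟩ := hfin.infinite_compl.exists_gt x
      exact ⟨y, hlt, hy⟩
    set μ : ℕ → ℕ := fun n =>
      Nat.rec 0 (fun _ x => Classical.choose (step x)) n with hμ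
    have hsucc : ∀ n, μ (n + 1) = Classical.choose (step (μ n)) := fun n => rfl
    have hmono : StrictMono μ := by
      refine strictMono_nat_of_lt_succ (fun n => ?_)
      rw [hsucc n]
      exact (Classical.choose_spec (step (μ n))).1
    have hnew : ∀ n, h (μ (n + 1)) ∉ h '' Set.Iic (μ n) := by
      intro n
      rw [hsucc n]
      exact (Classical.choose_spec (step (μ n))).2
    refine ⟨μ, hmono, Or.inr (fun j k hjk => ?_)⟩
    by_contra hne
    rcases Nat.lt_or_ge j k with hlt | hge
    · obtain ⟨k', rfl⟩ : ∃ k', k = k' + 1 := ⟨k - 1, by omega⟩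
      exact hnew k' ⟨μ j, hmono.monotone (by omega : j ≤ k'), hjk⟩
    · have hlt : k < j := by omega
      obtain ⟨j', rfl⟩ : ∃ j', j = j' + 1 := ⟨j - 1, by omega⟩
      exact hnew j' ⟨μ k, hmono.monotone (by omega : k ≤ j'), hjk.symm⟩

theorem lv_of_b_eq_one (hb1 : b = 1) (c₂ : List (Fin b) → R) (t : List (Fin b)) :
    LV c₂ t := by
  subst hb1
  intro l
  refine (Set.Ioi_infinite l).mono ?_
  intro m hm
  refine ⟨c₂ (List.replicate m 0), fun x hx1 hx2 => ?_⟩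
  refine ⟨List.replicate m 0, ?_, by simp, rfl⟩
  have hxr : x = List.replicate l 0 := by
    refine List.eq_replicate_iff.mpr ⟨hx2, fun a _ => Subsingleton.elim a 0⟩
  rw [hxr]
  refine ⟨List.replicate (m - l) 0, ?_⟩
  rw [← List.replicate_add]
  congr 1
  have : l < m := hm
  omega

/-- Embedding of the full tree into a strong subtree `U`. -/
theorem embed_U (hb : 0 < b) {U : Set (List (Fin b))} {LU : Set ℕ}
    (hU : IsStrongSub b U LU) (hLU : LU.Infinite) :
    ∃ f g, Emb b f g ∧ (∀ s, f s ∈ U) ∧ (∀ k, g k ∈ LU) := by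
  classical
  obtain ⟨hU1, hU2, hU3, hU4, hU5⟩ := hU
  obtain ⟨H, hGall, hmono, hcomp⟩ := fusionQ
    (fun k ch => ch.1 ∈ LU ∧ ∀ s : List (Fin b), s.length = k →
      (ch.2 s ∈ U ∧ (ch.2 s).length = ch.1))
    (by
      have h0 : sInf LU ∈ LU := Nat.sInf_mem hLU.nonempty
      obtain ⟨u, hu, hul⟩ := hU2 _ h0
      exact ⟨(sInf LU, fun _ => u), h0, fun s _ => ⟨hu, hul⟩⟩)
    (by
      intro k ch hch
      obtain ⟨hl, hnode⟩ := hch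
      obtain ⟨l₁, hl₁, hll₁⟩ := hLU.exists_gt ch.1
      have hne : {n | n ∈ LU ∧ ch.1 < n}.Nonempty := ⟨l₁, hl₁, hll₁⟩
      have hmem := Nat.sInf_mem hne
      set l' := sInf {n | n ∈ LU ∧ ch.1 < n} with hl'def
      have hnext : NextLvl LU ch.1 l' := by
        refine ⟨hl, hmem.1, hmem.2, fun n hn => ?_⟩
        rcases le_or_gt n ch.1 with h | h
        · exact Or.inl h
        · exact Or.inr (Nat.sInf_le ⟨hn, h⟩)
      have hpick : ∀ w : List (Fin b), ∃ y, (∃ t, t ∈ U ∧ t.length = l' ∧ w <+: t) →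
          (y ∈ U ∧ y.length = l' ∧ w <+: y) := by
        intro w
        by_cases h : ∃ t, t ∈ U ∧ t.length = l' ∧ w <+: t
        · obtain ⟨t, ht⟩ := h
          exact ⟨t, fun _ => ht⟩
        · exact ⟨[], fun hc => absurd hc h⟩
      choose pick hpickspec using hpick
      have hgood : ∀ s : List (Fin b), s.length = k → ∀ i : Fin b,
          ∃ t, t ∈ U ∧ t.length = l' ∧ ch.2 s ++ [i] <+: t := by
        intro s hs i
        have hn := hnode s hs
        have hnl : NextLvl LU (ch.2 s).length l' := by rw [hn.2]; exact hnext
        obtain ⟨t, ht, -⟩ := hU4 (ch.2 s) hn.1 l' hnl i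
        exact ⟨t, ht⟩
      refine ⟨(l', fun v => pick (ch.2 v.dropLast ++ [v.getLastD ⟨0, hb⟩])), hnext.2.2.1, ?_, ?_, ?_⟩
      · intro s i hs
        have h1 : (s ++ [i]).dropLast = s := List.dropLast_concat
        have h2 : (s ++ [i]).getLastD (⟨0, hb⟩ : Fin b) = i := by simp
        simp only [h1, h2]
        exact (hpickspec _ (hgood s hs i)).2.2
      · exact hmem.1
      · intro v hv
        have hdl : v.dropLast.length = k := by
          rw [List.length_dropLast, hv]; omega
        have hsp := hpickspec (ch.2 v.dropLast ++ [v.getLastD ⟨0, hb⟩])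
          (hgood v.dropLast hdl (v.getLastD ⟨0, hb⟩))
        exact ⟨hsp.1, hsp.2.1⟩)
  refine ⟨fun s => (H s.length).2 s, fun k => (H k).1,
    emb_of_H H hmono hcomp (fun k s hs => ((hGall k).2 s hs).2),
    fun s => ((hGall s.length).2 s rfl).1, fun k => (hGall k).1⟩

/-- Fusion along a levelish node: all levels monochromatic. -/
theorem LV_fusion (hb : 0 < b) (c₂ : List (Fin b) → R) (t : List (Fin b))
    (hLV : LV c₂ t) :
    ∃ f g, Emb b f g ∧
      ∀ s s' : List (Fin b), s.length = s'.length → c₂ (f s) = c₂ (f s') := by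
  classical
  obtain ⟨H, hGall, hmono, hcomp⟩ := fusionQ
    (fun k ch => ∀ s : List (Fin b), s.length = k →
      (t <+: ch.2 s ∧ (ch.2 s).length = ch.1) ∧
      ∀ s' : List (Fin b), s'.length = k → c₂ (ch.2 s) = c₂ (ch.2 s'))
    (by
      obtain ⟨m, hmCS, hmlt⟩ := (hLV t.length).exists_gt t.length
      obtain ⟨r, hr⟩ := hmCS
      obtain ⟨y, hy1, hy2, hy3⟩ := hr t (List.prefix_refl t) rfl
      exact ⟨(m, fun _ => y), fun s _ => ⟨⟨hy1, hy2⟩, fun s' _ => rfl⟩⟩)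
    (by
      intro k ch hch
      obtain ⟨m, hmCS, hmlt⟩ := (hLV (ch.1 + 1)).exists_gt (ch.1 + 1)
      obtain ⟨r, hr⟩ := hmCS
      have hpick : ∀ w : List (Fin b), ∃ y, (t <+: w ∧ w.length = ch.1 + 1) →
          (w <+: y ∧ y.length = m ∧ c₂ y = r) := by
        intro w
        by_cases h : t <+: w ∧ w.length = ch.1 + 1
        · obtain ⟨y, hy⟩ := hr w h.1 h.2
          exact ⟨y, fun _ => hy⟩
        · exact ⟨[], fun hc => absurd hc h⟩
      choose pick hpickspec using hpick
      have hgoodw : ∀ v : List (Fin b), v.length = k + 1 →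
          t <+: ch.2 v.dropLast ++ [v.getLastD ⟨0, hb⟩] ∧
          (ch.2 v.dropLast ++ [v.getLastD ⟨0, hb⟩]).length = ch.1 + 1 := by
        intro v hv
        have hdl : v.dropLast.length = k := by
          rw [List.length_dropLast, hv]; omega
        have hn := (hch v.dropLast hdl).1
        exact ⟨hn.1.trans (List.prefix_append _ _), by simp [hn.2]⟩
      refine ⟨(m, fun v => pick (ch.2 v.dropLast ++ [v.getLastD ⟨0, hb⟩])), by omega, ?_, ?_⟩
      · intro s i hs
        have h1 : (s ++ [i]).dropLast = s := List.dropLast_concat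
        have h2 : (s ++ [i]).getLastD (⟨0, hb⟩ : Fin b) = i := by simp
        simp only [h1, h2]
        have hn := (hch s hs).1
        have hg : t <+: ch.2 s ++ [i] ∧ (ch.2 s ++ [i]).length = ch.1 + 1 :=
          ⟨hn.1.trans (List.prefix_append _ _), by simp [hn.2]⟩
        exact (hpickspec _ hg).1
      · intro v hv
        have hsp := hpickspec _ (hgoodw v hv)
        refine ⟨⟨(hgoodw v hv).1.trans hsp.1, hsp.2.1⟩, ?_⟩
        intro v' hv'
        have hsp' := hpickspec _ (hgoodw v' hv')
        rw [hsp.2.2, hsp'.2.2])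
  refine ⟨fun s => (H s.length).2 s, fun k => (H k).1,
    emb_of_H H hmono hcomp (fun k s hs => ((hGall k) s hs).1.2), ?_⟩
  intro s s' hl
  show c₂ ((H s.length).2 s) = c₂ ((H s'.length).2 s')
  rw [hl]
  exact ((hGall s'.length) s hl).2 s' rfl

/-- Fusion producing rainbow levels when no node is levelish. -/
theorem rainbow_fusion (hb : 0 < b) (c₂ : List (Fin b) → R) (hB : ∀ t, ¬ LV c₂ t) :
    ∃ f g, Emb b f g ∧
      ∀ s s' : List (Fin b), s.length = s'.length → c₂ (f s) = c₂ (f s') → s = s' := by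
  classical
  obtain ⟨H, hGall, hmono, hcomp⟩ := fusionQ
    (fun k ch => ∀ s : List (Fin b), s.length = k →
      (ch.2 s).length = ch.1 ∧
      ∀ s' : List (Fin b), s'.length = k → c₂ (ch.2 s) = c₂ (ch.2 s') → s = s')
    (⟨(0, fun _ => []), fun s hs =>
      ⟨by rw [List.length_eq_zero_iff.mp hs]; rfl,
       fun s' hs' _ => by rw [List.length_eq_zero_iff.mp hs, List.length_eq_zero_iff.mp hs']⟩⟩)
    (by
      intro k ch hch
      set Z : Finset (List (Fin b)) := (listsLen b (k + 1)).image
        (fun v => ch.2 v.dropLast ++ [v.getLastD ⟨0, hb⟩]) with hZ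
      have hlenZ : ∀ z ∈ Z, z.length ≤ ch.1 + 1 := by
        intro z hz
        obtain ⟨v, hv, rfl⟩ := Finset.mem_image.mp hz
        have hdl : v.dropLast.length = k := by
          rw [List.length_dropLast, mem_listsLen.mp hv]; omega
        simp [(hch v.dropLast hdl).1]
      obtain ⟨m, hm, y, hy1, hy2⟩ := rainbow_stage hb c₂ hB Z (ch.1 + 1) hlenZ
      refine ⟨(m, fun v => y (ch.2 v.dropLast ++ [v.getLastD ⟨0, hb⟩])), by omega, ?_, ?_⟩
      · intro s i hs
        have h1 : (s ++ [i]).dropLast = s := List.dropLast_concat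
        have h2 : (s ++ [i]).getLastD (⟨0, hb⟩ : Fin b) = i := by simp
        simp only [h1, h2]
        have hzmem : ch.2 s ++ [i] ∈ Z := by
          refine Finset.mem_image.mpr ⟨s ++ [i], mem_listsLen.mpr (by simp [hs]), ?_⟩
          show ch.2 (s ++ [i]).dropLast ++ [(s ++ [i]).getLastD ⟨0, hb⟩] = ch.2 s ++ [i]
          rw [h1, h2]
        exact (hy1 _ hzmem).1
      · intro v hv
        have hdl : v.dropLast.length = k := by rw [List.length_dropLast, hv]; omega
        have hzv : ch.2 v.dropLast ++ [v.getLastD ⟨0, hb⟩] ∈ Z :=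
          Finset.mem_image.mpr ⟨v, mem_listsLen.mpr hv, rfl⟩
        refine ⟨(hy1 _ hzv).2, ?_⟩
        intro v' hv' hcc
        have hdl' : v'.dropLast.length = k := by rw [List.length_dropLast, hv']; omega
        have hzv' : ch.2 v'.dropLast ++ [v'.getLastD ⟨0, hb⟩] ∈ Z :=
          Finset.mem_image.mpr ⟨v', mem_listsLen.mpr hv', rfl⟩
        have hzz := hy2 _ hzv _ hzv' hcc
        have hlen1 : (ch.2 v.dropLast).length = (ch.2 v'.dropLast).length := by
          rw [(hch _ hdl).1, (hch _ hdl').1]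
        obtain ⟨he1, he2⟩ := List.append_inj hzz hlen1
        have hdle : v.dropLast = v'.dropLast :=
          (hch _ hdl).2 _ hdl' (congrArg c₂ he1)
        have hlaste : v.getLastD ⟨0, hb⟩ = v'.getLastD ⟨0, hb⟩ :=
          List.singleton_inj.mp he2
        rw [← decomp hv ⟨0, hb⟩, ← decomp hv' ⟨0, hb⟩, hdle, hlaste])
  refine ⟨fun s => (H s.length).2 s, fun k => (H k).1,
    emb_of_H H hmono hcomp (fun k s hs => ((hGall k) s hs).1), ?_⟩
  intro s s' hl hcc
  have hcc' : c₂ ((H s.length).2 s) = c₂ ((H s'.length).2 s') := hcc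
  rw [hl] at hcc'
  exact ((hGall s'.length) s hl).2 s' rfl hcc'

/-- Fusion producing a fully injective coloring, given level-injectivity. -/
theorem inj_fusion (hb : 0 < b) (hb2 : 1 < b) (c₃ : List (Fin b) → R)
    (hli : ∀ s s' : List (Fin b), s.length = s'.length → c₃ s = c₃ s' → s = s') :
    ∃ f g, Emb b f g ∧ ∀ s s' : List (Fin b), c₃ (f s) = c₃ (f s') → s = s' := by
  classical
  obtain ⟨H, hGall, hmono, hcomp⟩ := fusion
    (fun k H =>
      (∀ j, j ≤ k → ∀ s : List (Fin b), s.length = j →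
        ((H j).2 s).length = (H j).1) ∧
      (∀ j j', j ≤ k → j' ≤ k → ∀ s s' : List (Fin b), s.length = j → s'.length = j' →
        c₃ ((H j).2 s) = c₃ ((H j').2 s') → j = j' ∧ s = s'))
    (by
      intro k H H' hj hGk
      constructor
      · intro j hjk s hs
        rw [← hj j hjk]; exact hGk.1 j hjk s hs
      · intro j j' hjk hj'k s s' hs hs' hcc
        rw [← hj j hjk, ← hj j' hj'k] at hcc
        exact hGk.2 j j' hjk hj'k s s' hs hs' hcc)
    (by
      refine ⟨(0, fun _ => []), ?_, ?_⟩
      · intro j hj s hs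
        rfl
      · intro j j' hj hj' s s' hs hs' _
        have hj0 : j = 0 := by omega
        have hj'0 : j' = 0 := by omega
        subst hj0; subst hj'0
        exact ⟨rfl, by rw [List.length_eq_zero_iff.mp hs, List.length_eq_zero_iff.mp hs']⟩)
    (by
      intro k H hGk
      obtain ⟨hlen, hinj⟩ := hGk
      set l := (H k).1 with hldef
      set F : Finset (List (Fin b)) := (Finset.range (k + 1)).biUnion
        (fun j => (listsLen b j).image (H j).2) with hF
      set d := F.card + 1 with hd
      set m := l + 1 + d with hmdef
      have hstage : ∀ z : List (Fin b), z.length = l + 1 →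
          ∃ x, (z <+: x ∧ x.length = m) ∧ ∀ w ∈ F, c₃ x ≠ c₃ w := by
        intro z hz
        have hcard : (extsFin z m).card = b ^ d := by
          rw [card_extsFin, hz]
          congr 1
          omega
        have hforbsub : (extsFin z m).filter (fun x => ∃ w ∈ F, c₃ x = c₃ w) ⊆
            F.biUnion (fun w => (extsFin z m).filter (fun x => c₃ x = c₃ w)) := by
          intro x hx
          obtain ⟨hx1, w, hw, he⟩ := Finset.mem_filter.mp hx
          exact Finset.mem_biUnion.mpr ⟨w, hw, Finset.mem_filter.mpr ⟨hx1, he⟩⟩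
        have hone : ∀ w, ((extsFin z m).filter (fun x => c₃ x = c₃ w)).card ≤ 1 := by
          intro w
          refine Finset.card_le_one.mpr ?_
          intro a ha a' ha'
          obtain ⟨ha1, ha2⟩ := Finset.mem_filter.mp ha
          obtain ⟨hb1, hb2⟩ := Finset.mem_filter.mp ha'
          have hla := ((mem_extsFin (by omega : z.length ≤ m)).mp ha1).2
          have hlb := ((mem_extsFin (by omega : z.length ≤ m)).mp hb1).2
          exact hli a a' (by rw [hla, hlb]) (by rw [ha2, hb2])
        have hforbcard :
            ((extsFin z m).filter (fun x => ∃ w ∈ F, c₃ x = c₃ w)).card ≤ F.card := by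
          calc ((extsFin z m).filter (fun x => ∃ w ∈ F, c₃ x = c₃ w)).card
              ≤ (F.biUnion (fun w => (extsFin z m).filter (fun x => c₃ x = c₃ w))).card :=
                Finset.card_le_card hforbsub
            _ ≤ ∑ w ∈ F, ((extsFin z m).filter (fun x => c₃ x = c₃ w)).card :=
                Finset.card_biUnion_le
            _ ≤ ∑ _w ∈ F, 1 := Finset.sum_le_sum (fun w _ => hone w)
            _ = F.card := by simp
        have hlt : F.card < b ^ d := by
          have h1 : F.card < 2 ^ F.card := Nat.lt_two_pow_self
          have h2 : (2 : ℕ) ^ F.card ≤ 2 ^ d := Nat.pow_le_pow_right (by omega) (by omega)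
          have h3 : (2 : ℕ) ^ d ≤ b ^ d := Nat.pow_le_pow_left hb2 d
          omega
        have hnsub : ¬ (extsFin z m ⊆
            (extsFin z m).filter (fun x => ∃ w ∈ F, c₃ x = c₃ w)) := by
          intro hsub
          have := Finset.card_le_card hsub
          omega
        obtain ⟨x, hx1, hx2⟩ := Finset.not_subset.mp hnsub
        refine ⟨x, (mem_extsFin (by omega : z.length ≤ m)).mp hx1, ?_⟩
        intro w hw he
        exact hx2 (Finset.mem_filter.mpr ⟨hx1, w, hw, he⟩)
      have hpick : ∀ z : List (Fin b), ∃ x, z.length = l + 1 →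
          ((z <+: x ∧ x.length = m) ∧ ∀ w ∈ F, c₃ x ≠ c₃ w) := by
        intro z
        by_cases h : z.length = l + 1
        · obtain ⟨x, hx⟩ := hstage z h
          exact ⟨x, fun _ => hx⟩
        · exact ⟨[], fun hc => absurd hc h⟩
      choose pick hpickspec using hpick
      have hchlen : ∀ v : List (Fin b), v.length = k + 1 →
          ((H k).2 v.dropLast ++ [v.getLastD ⟨0, hb⟩]).length = l + 1 := by
        intro v hv
        have hdl : v.dropLast.length = k := by rw [List.length_dropLast, hv]; omega
        simp [hlen k le_rfl v.dropLast hdl, hldef]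
      refine ⟨(m, fun v => pick ((H k).2 v.dropLast ++ [v.getLastD ⟨0, hb⟩])),
        by show l < m; omega, ?_, ?_⟩
      · intro s i hs
        have h1 : (s ++ [i]).dropLast = s := List.dropLast_concat
        have h2 : (s ++ [i]).getLastD (⟨0, hb⟩ : Fin b) = i := by simp
        simp only [h1, h2]
        have hg := hchlen (s ++ [i]) (by simp [hs])
        rw [h1, h2] at hg
        exact (hpickspec _ hg).1.1
      · constructor
        · intro j hjk1 s hs
          rcases Nat.lt_or_ge j (k + 1) with hlt | hge
          · rw [Function.update_of_ne (by omega : j ≠ k + 1)]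
            exact hlen j (by omega) s hs
          · have hj : j = k + 1 := by omega
            subst hj
            rw [Function.update_self]
            exact (hpickspec _ (hchlen s hs)).1.2
        · intro j j' hjk1 hj'k1 s s' hs hs' hcc
          rcases Nat.lt_or_ge j (k + 1) with hlt | hge
          · rcases Nat.lt_or_ge j' (k + 1) with hlt' | hge'
            · rw [Function.update_of_ne (by omega : j ≠ k + 1),
                Function.update_of_ne (by omega : j' ≠ k + 1)] at hcc
              exact hinj j j' (by omega) (by omega) s s' hs hs' hcc
            · have hj' : j' = k + 1 := by omega
              subst hj'
              rw [Function.update_of_ne (by omega : j ≠ k + 1),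
                Function.update_self] at hcc
              exfalso
              have hmemF : (H j).2 s ∈ F := by
                refine Finset.mem_biUnion.mpr ⟨j, Finset.mem_range.mpr (by omega), ?_⟩
                exact Finset.mem_image.mpr ⟨s, mem_listsLen.mpr hs, rfl⟩
              exact (hpickspec _ (hchlen s' hs')).2 _ hmemF hcc.symm
          · have hj : j = k + 1 := by omega
            subst hj
            rcases Nat.lt_or_ge j' (k + 1) with hlt' | hge'
            · rw [Function.update_of_ne (by omega : j' ≠ k + 1),
                Function.update_self] at hcc
              exfalso
              have hmemF : (H j').2 s' ∈ F := by
                refine Finset.mem_biUnion.mpr ⟨j', Finset.mem_range.mpr (by omega), ?_⟩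
                exact Finset.mem_image.mpr ⟨s', mem_listsLen.mpr hs', rfl⟩
              exact (hpickspec _ (hchlen s hs)).2 _ hmemF hcc
            · have hj' : j' = k + 1 := by omega
              subst hj'
              rw [Function.update_self] at hcc
              have hsp := hpickspec _ (hchlen s hs)
              have hsp' := hpickspec _ (hchlen s' hs')
              have hyy : pick ((H k).2 s.dropLast ++ [s.getLastD ⟨0, hb⟩]) =
                  pick ((H k).2 s'.dropLast ++ [s'.getLastD ⟨0, hb⟩]) :=
                hli _ _ (by rw [hsp.1.2, hsp'.1.2]) hcc
              have hzz : (H k).2 s.dropLast ++ [s.getLastD ⟨0, hb⟩] =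
                  (H k).2 s'.dropLast ++ [s'.getLastD ⟨0, hb⟩] := by
                refine prefix_eq_of_length hsp.1.1 (hyy ▸ hsp'.1.1) ?_
                rw [hchlen s hs, hchlen s' hs']
              have hdl : s.dropLast.length = k := by rw [List.length_dropLast, hs]; omega
              have hdl' : s'.dropLast.length = k := by rw [List.length_dropLast, hs']; omega
              have hlen1 : ((H k).2 s.dropLast).length = ((H k).2 s'.dropLast).length := by
                rw [hlen k le_rfl _ hdl, hlen k le_rfl _ hdl']
              obtain ⟨he1, he2⟩ := List.append_inj hzz hlen1
              have hdle : s.dropLast = s'.dropLast :=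
                (hinj k k le_rfl le_rfl _ _ hdl hdl' (congrArg c₃ he1)).2
              have hlaste : s.getLastD ⟨0, hb⟩ = s'.getLastD ⟨0, hb⟩ :=
                List.singleton_inj.mp he2
              refine ⟨rfl, ?_⟩
              rw [← decomp hs ⟨0, hb⟩, ← decomp hs' ⟨0, hb⟩, hdle, hlaste])
  refine ⟨fun s => (H s.length).2 s, fun k => (H k).1,
    emb_of_H H hmono hcomp (fun k s hs => (hGall k).1 k le_rfl s hs), ?_⟩
  intro s s' hcc
  have hcc' : c₃ ((H s.length).2 s) = c₃ ((H s'.length).2 s') := hcc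
  exact ((hGall (max s.length s'.length)).2 s.length s'.length
    (le_max_left _ _) (le_max_right _ _) s s' rfl rfl hcc').2
end Canon

/-- Canonization of node colorings (the case `n = 1` of Milliken's canonical theorem):
for any coloring of the nodes of an infinite `b`-branching tree `U` there is an infinite
strong subtree `T` on whose nodes the coloring is constant, one-to-one, or determined
exactly by the height. -/
theorem node_coloring_canonical {R : Type*} (b : ℕ) (hb : 0 < b)
    (U : Set (List (Fin b))) (LU : Set ℕ)
    (hU : IsStrongSub b U LU) (hLU : LU.Infinite) (c : List (Fin b) → R) :
    ∃ (T : Set (List (Fin b))) (LT : Set ℕ),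
      IsStrongSub b T LT ∧ LT.Infinite ∧ T ⊆ U ∧ LT ⊆ LU ∧
      ((∀ s ∈ T, ∀ t ∈ T, c s = c t) ∨
        Set.InjOn c T ∨
        (∀ s ∈ T, ∀ t ∈ T, (c s = c t ↔ s.length = t.length))) := by
  classical
  obtain ⟨e, gU, hEe, heU, hgLU⟩ := Canon.embed_U hb hU hLU
  set c₂ : List (Fin b) → R := fun s => c (e s) with hc₂
  by_cases hLVex : ∃ t, Canon.LV c₂ t
  · -- levelish case: monochromatic levels, then 1-dimensional canonical Ramsey
    obtain ⟨t, hLV⟩ := hLVex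
    obtain ⟨fA, gA, hEA, hconst⟩ := Canon.LV_fusion hb c₂ t hLV
    set h : ℕ → R := fun k => c₂ (fA (List.replicate k ⟨0, hb⟩)) with hh
    have hcol : ∀ s : List (Fin b), c₂ (fA s) = h s.length :=
      fun s => hconst s _ (by simp)
    obtain ⟨μ, hμ, hcan⟩ := Canon.nat_canonical h
    obtain ⟨p, hEp⟩ := Canon.pad hb hμ
    set ftot : List (Fin b) → List (Fin b) := fun s => e (fA (p s)) with hftot
    set gtot : ℕ → ℕ := fun k => gU (gA (μ k)) with hgtot
    have hEtot : Canon.Emb b ftot gtot := hEe.comp (hEA.comp hEp)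
    have hcolor : ∀ u : List (Fin b), c (ftot u) = h (μ u.length) := by
      intro u
      show c₂ (fA (p u)) = _
      rw [hcol, hEp.2.1]
    refine ⟨Set.range ftot, Set.range gtot, hEtot.strongSub hb,
      Set.infinite_range_of_injective hEtot.1.injective, ?_, ?_, ?_⟩
    · rintro s ⟨u, rfl⟩
      exact heU _
    · rintro l ⟨k, rfl⟩
      exact hgLU _
    · rcases hcan with hcn | hcn
      · left
        rintro s ⟨u, rfl⟩ t' ⟨v, rfl⟩
        rw [hcolor, hcolor]
        exact hcn _ _
      · right; right
        rintro s ⟨u, rfl⟩ t' ⟨v, rfl⟩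
        rw [hcolor, hcolor]
        constructor
        · intro hhc
          have huv := hcn _ _ hhc
          show (ftot u).length = (ftot v).length
          rw [hEtot.2.1, hEtot.2.1]
          exact congrArg gtot huv
        · intro hl
          have hl' : (ftot u).length = (ftot v).length := hl
          rw [hEtot.2.1, hEtot.2.1] at hl'
          have := hEtot.1.injective hl'
          rw [this]
  · -- no levelish node: rainbow levels, then injectivity by counting
    push_neg at hLVex
    have hb2 : 1 < b := by
      rcases Nat.lt_or_ge 1 b with hlt | hge
      · exact hlt
      · exfalso
        exact hLVex [] (Canon.lv_of_b_eq_one (by omega) c₂ [])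
    obtain ⟨fR, gR, hER, hRinj⟩ := Canon.rainbow_fusion hb c₂ hLVex
    set c₃ : List (Fin b) → R := fun s => c₂ (fR s) with hc₃
    have hli : ∀ s s' : List (Fin b), s.length = s'.length → c₃ s = c₃ s' → s = s' :=
      fun s s' hl hcc => hRinj s s' hl hcc
    obtain ⟨fI, gI, hEI, hIinj⟩ := Canon.inj_fusion hb hb2 c₃ hli
    set ftot : List (Fin b) → List (Fin b) := fun s => e (fR (fI s)) with hftot
    set gtot : ℕ → ℕ := fun k => gU (gR (gI k)) with hgtot
    have hEtot : Canon.Emb b ftot gtot := hEe.comp (hER.comp hEI)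
    refine ⟨Set.range ftot, Set.range gtot, hEtot.strongSub hb,
      Set.infinite_range_of_injective hEtot.1.injective, ?_, ?_, ?_⟩
    · rintro s ⟨u, rfl⟩
      exact heU _
    · rintro l ⟨k, rfl⟩
      exact hgLU _
    · right; left
      intro s hs t' ht' hcc
      obtain ⟨u, rfl⟩ := hs
      obtain ⟨v, rfl⟩ := ht'
      have hcc' : c₃ (fI u) = c₃ (fI v) := hcc
      rw [hIinj _ _ hcc']
end

section
/- Pudlák–Rödl disjointification lemma: Let G₁ and G₂ be uniform families on an infinite set Y ⊆ ω, and let φ₁, φ₂ be one-to-one maps defined on G₁ and G₂ respectively. Then there exists an infinite X ⊆ Y such that either (1) G₁↾X = G₂↾X and φ₁(A) = φ₂(A) for every A ∈ G₁↾X, or (2) φ₁(G₁↾X) ∩ φ₂(G₂↾X) = ∅. -/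
open Ordinal

/-- The derived family `G(n) = {A : {n} ∪ A ∈ G ∧ n < min A}`. -/
def derFam (G : Set (Finset ℕ)) (n : ℕ) : Set (Finset ℕ) :=
  {A | insert n A ∈ G ∧ ∀ x ∈ A, n < x}

/-- `α`-uniform families of finite subsets on an infinite set `X ⊆ ω`. -/
inductive IsUnifOmega : Ordinal → Set (Finset ℕ) → Set ℕ → Prop
  | zero (X : Set ℕ) : IsUnifOmega 0 {∅} X
  | succ (β : Ordinal) (G : Set (Finset ℕ)) (X : Set ℕ) (h0 : ∅ ∉ G)
      (h : ∀ n ∈ X, IsUnifOmega β (derFam G n) {m ∈ X | n < m}) :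
      IsUnifOmega (β + 1) G X
  | limit (α : Ordinal) (G : Set (Finset ℕ)) (X : Set ℕ) (hα : Order.IsSuccLimit α) (h0 : ∅ ∉ G)
      (f : ℕ → Ordinal) (hf : StrictMono f) (hsup : (⨆ n, f n) = α)
      (h : ∀ n ∈ X, IsUnifOmega (f n) (derFam G n) {m ∈ X | n < m}) :
      IsUnifOmega α G X


namespace PRaux

lemma infinite_above {Z : Set ℕ} (hZ : Z.Infinite) (n : ℕ) : {m ∈ Z | n < m}.Infinite := by
  have h : {m ∈ Z | n < m} = Z \ Set.Iic n := by
    ext m; simp [Set.mem_Iic, not_le]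
  rw [h]; exact hZ.diff (Set.finite_Iic n)

lemma unif_mono : ∀ {α G Y}, IsUnifOmega α G Y → ∀ X ⊆ Y, IsUnifOmega α G X := by
  intro α G Y h
  induction h with
  | zero Y => intro X _; exact .zero X
  | succ β G Y h0 h ih =>
      intro X hXY
      exact .succ β G X h0 (fun n hn => ih n (hXY hn) _ (fun m hm => ⟨hXY hm.1, hm.2⟩))
  | limit α G Y hα h0 f hf hsup h ih =>
      intro X hXY
      exact .limit α G X hα h0 f hf hsup (fun n hn => ih n (hXY hn) _ (fun m hm => ⟨hXY hm.1, hm.2⟩))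

lemma pos_inv {α G Y} (h : IsUnifOmega α G Y) (hα : α ≠ 0) :
    ∅ ∉ G ∧ ∀ n ∈ Y, ∃ β < α, IsUnifOmega β (derFam G n) {m ∈ Y | n < m} := by
  cases h with
  | zero => exact absurd rfl hα
  | succ β G Y h0 h =>
      exact ⟨h0, fun n hn => ⟨β, by rw [Ordinal.add_one_eq_succ]; exact Order.lt_succ β, h n hn⟩⟩
  | limit α G Y hl h0 f hf hsup h =>
      refine ⟨h0, fun n hn => ⟨f n, ?_, h n hn⟩⟩
      calc f n < f (n+1) := hf (Nat.lt_succ_self n)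
        _ ≤ ⨆ m, f m := Ordinal.le_iSup f (n+1)
        _ = _ := hsup

lemma zero_inv' {α G Y} (h : IsUnifOmega α G Y) (hz : α = 0) : G = {∅} := by
  induction h with
  | zero Y => rfl
  | succ β G Y h0 h ih => exact absurd hz (Ordinal.succ_ne_zero β)
  | limit α G Y hα h0 f hf hsup h ih => exact absurd hz hα.ne_zero

lemma zero_inv {G Y} (h : IsUnifOmega 0 G Y) : G = {∅} := zero_inv' h rfl


lemma fusion (Y : Set ℕ) (hY : Y.Infinite) (Q : ℕ → Set ℕ → Prop)
    (step : ∀ n ∈ Y, ∀ Z, Z.Infinite → Z ⊆ {m ∈ Y | n < m} →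
      ∃ Z', Z' ⊆ Z ∧ Z'.Infinite ∧ Q n Z') :
    ∃ (x : ℕ → ℕ) (W : ℕ → Set ℕ), StrictMono x ∧ (∀ k, x k ∈ Y) ∧
      (∀ k, Q (x k) (W k)) ∧ (∀ k, W k ⊆ {m ∈ Y | x k < m}) ∧
      (∀ k j, k < j → x j ∈ W k) := by
  classical
  let S := {p : ℕ × Set ℕ // p.1 ∈ Y ∧ p.2.Infinite ∧ p.2 ⊆ {m ∈ Y | p.1 < m} ∧ Q p.1 p.2}
  have key : ∀ s : S, ∃ t : S, t.1.1 ∈ s.1.2 ∧ t.1.2 ⊆ s.1.2 := by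
    rintro ⟨⟨n, W⟩, hn, hWinf, hWsub, hQ⟩
    obtain ⟨n', hn'⟩ := hWinf.nonempty
    have hn'Y : n' ∈ Y := (hWsub hn').1
    obtain ⟨Z', hZ'sub, hZ'inf, hQ'⟩ := step n' hn'Y {m ∈ W | n' < m} (infinite_above hWinf n')
      (fun m hm => ⟨(hWsub hm.1).1, hm.2⟩)
    refine ⟨⟨(n', Z'), hn'Y, hZ'inf, ?_, hQ'⟩, hn', fun m hm => (hZ'sub hm).1⟩
    exact fun m hm => ⟨(hWsub (hZ'sub hm).1).1, (hZ'sub hm).2⟩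
  obtain ⟨n₀, hn₀⟩ := hY.nonempty
  obtain ⟨W₀, hW₀sub, hW₀inf, hQ₀⟩ := step n₀ hn₀ {m ∈ Y | n₀ < m} (infinite_above hY n₀)
    (fun m hm => hm)
  let s0 : S := ⟨(n₀, W₀), hn₀, hW₀inf, hW₀sub, hQ₀⟩
  let g : ℕ → S := fun k => (fun s => (key s).choose)^[k] s0
  have hg : ∀ k, g (k+1) = (key (g k)).choose := by
    intro k
    show (fun s => (key s).choose)^[k+1] s0 = _
    rw [Function.iterate_succ_apply']
  have hstep : ∀ k, (g (k+1)).1.1 ∈ (g k).1.2 ∧ (g (k+1)).1.2 ⊆ (g k).1.2 := by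
    intro k; rw [hg]; exact (key (g k)).choose_spec
  have hWmono : ∀ k j, k ≤ j → (g j).1.2 ⊆ (g k).1.2 := by
    intro k j hkj
    induction hkj with
    | refl => exact subset_rfl
    | @step m h ih => exact ((hstep m).2).trans ih
  refine ⟨fun k => (g k).1.1, fun k => (g k).1.2, ?_, fun k => (g k).2.1,
    fun k => (g k).2.2.2.2, fun k => (g k).2.2.2.1, ?_⟩
  · apply strictMono_nat_of_lt_succ
    intro k
    exact ((g k).2.2.2.1 (hstep k).1).2
  · intro k j hkj
    obtain ⟨m, rfl⟩ : ∃ m, j = m + 1 := ⟨j - 1, (Nat.succ_pred_eq_of_pos (Nat.pos_of_ne_zero (by omega))).symm⟩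
    exact hWmono k m (Nat.lt_succ_iff.mp hkj) (hstep m).1

lemma bool_pigeon (d : ℕ → Bool) : ∃ b, {k | d k = b}.Infinite := by
  by_contra hcon
  push_neg at hcon
  have h1 := hcon true
  have h2 := hcon false
  have hsub : (Set.univ : Set ℕ) ⊆ {k | d k = true} ∪ {k | d k = false} := by
    intro k _
    rcases Bool.eq_false_or_eq_true (d k) with h | h
    · simp [h]
    · simp [h]
  exact Set.infinite_univ ((h1.union h2).subset hsub)

lemma erase_min_mem_derFam {G : Set (Finset ℕ)} {s : Finset ℕ} (hs : s ∈ G) (hne : s.Nonempty) :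
    s.erase (s.min' hne) ∈ derFam G (s.min' hne) := by
  constructor
  · rw [Finset.insert_erase (s.min'_mem hne)]; exact hs
  · intro x hx
    exact lt_of_le_of_ne (s.min'_le x (Finset.mem_of_mem_erase hx))
      (Ne.symm (Finset.ne_of_mem_erase hx))

lemma image_subset_W {x : ℕ → ℕ} {W : ℕ → Set ℕ} (hx : StrictMono x)
    (hW : ∀ k j, k < j → x j ∈ W k) {K : Set ℕ} {A : Finset ℕ} {k : ℕ}
    (hA : (↑A : Set ℕ) ⊆ x '' K) (hgt : ∀ a ∈ A, x k < a) : (↑A : Set ℕ) ⊆ W k := by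
  intro a ha
  obtain ⟨j, _, rfl⟩ := hA ha
  exact hW k j (hx.lt_iff_lt.mp (hgt _ ha))


lemma nw_core {G : Set (Finset ℕ)} {Y : Set ℕ} (h0 : ∅ ∉ G)
    (ih : ∀ n ∈ Y, ∀ X, X ⊆ {m ∈ Y | n < m} → X.Infinite → ∀ H : Set (Finset ℕ),
      ∃ X', X' ⊆ X ∧ X'.Infinite ∧
        ((∀ s ∈ derFam G n, (↑s : Set ℕ) ⊆ X' → s ∈ H) ∨
         (∀ s ∈ derFam G n, (↑s : Set ℕ) ⊆ X' → s ∉ H)))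
    (X : Set ℕ) (hXY : X ⊆ Y) (hX : X.Infinite) (H : Set (Finset ℕ)) :
    ∃ X', X' ⊆ X ∧ X'.Infinite ∧
      ((∀ s ∈ G, (↑s : Set ℕ) ⊆ X' → s ∈ H) ∨ (∀ s ∈ G, (↑s : Set ℕ) ⊆ X' → s ∉ H)) := by
  classical
  set Q : ℕ → Set ℕ → Prop := fun n Z' =>
    (∀ s ∈ derFam G n, (↑s : Set ℕ) ⊆ Z' → insert n s ∈ H) ∨
    (∀ s ∈ derFam G n, (↑s : Set ℕ) ⊆ Z' → insert n s ∉ H) with hQdef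
  have hstep : ∀ n ∈ X, ∀ Z, Z.Infinite → Z ⊆ {m ∈ X | n < m} →
      ∃ Z', Z' ⊆ Z ∧ Z'.Infinite ∧ Q n Z' := by
    intro n hn Z hZinf hZsub
    obtain ⟨Z', h1, h2, h3⟩ := ih n (hXY hn) Z
      (fun m hm => ⟨hXY (hZsub hm).1, (hZsub hm).2⟩) hZinf {s | insert n s ∈ H}
    exact ⟨Z', h1, h2, h3⟩
  obtain ⟨x, W, hxmono, hxX, hQ, hWsub, hcross⟩ := fusion X hX Q hstep
  let d : ℕ → Bool := fun k =>
    if (∀ s ∈ derFam G (x k), (↑s : Set ℕ) ⊆ W k → insert (x k) s ∈ H) then true else false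
  obtain ⟨b, hK⟩ := bool_pigeon d
  have hX'sub : x '' {k | d k = b} ⊆ X := by rintro _ ⟨k, _, rfl⟩; exact hxX k
  have hdecomp : ∀ s ∈ G, (↑s : Set ℕ) ⊆ x '' {k | d k = b} →
      ∃ k, d k = b ∧ s.erase (x k) ∈ derFam G (x k) ∧
        (↑(s.erase (x k)) : Set ℕ) ⊆ W k ∧ insert (x k) (s.erase (x k)) = s := by
    intro s hs hsX
    have hne : s.Nonempty := by
      rcases Finset.eq_empty_or_nonempty s with rfl | h
      · exact absurd hs h0
      · exact h
    obtain ⟨k, hk, hxk⟩ := hsX (by exact_mod_cast s.min'_mem hne)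
    refine ⟨k, hk, ?_, ?_, ?_⟩
    · rw [hxk]; exact erase_min_mem_derFam hs hne
    · refine image_subset_W hxmono hcross (fun a ha => hsX (by exact_mod_cast Finset.mem_of_mem_erase ha)) ?_
      intro a ha
      rw [hxk]
      exact lt_of_le_of_ne (s.min'_le a (Finset.mem_of_mem_erase ha))
        (Ne.symm (by rw [← hxk]; exact Finset.ne_of_mem_erase ha))
    · rw [hxk]; exact Finset.insert_erase (s.min'_mem hne)
  refine ⟨x '' {k | d k = b}, hX'sub, hK.image (Function.Injective.injOn hxmono.injective), ?_⟩
  cases b with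
  | true =>
      left
      intro s hs hsX
      obtain ⟨k, hk, hder, hWk, hins⟩ := hdecomp s hs hsX
      have hcond : ∀ s ∈ derFam G (x k), (↑s : Set ℕ) ⊆ W k → insert (x k) s ∈ H := by
        by_contra hc
        simp only [d, if_neg hc] at hk
        exact Bool.false_ne_true hk
      have := hcond _ hder hWk
      rwa [hins] at this
  | false =>
      right
      intro s hs hsX hsH
      obtain ⟨k, hk, hder, hWk, hins⟩ := hdecomp s hs hsX
      have hcond : ¬ (∀ s ∈ derFam G (x k), (↑s : Set ℕ) ⊆ W k → insert (x k) s ∈ H) := by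
        intro hc
        simp only [d, if_pos hc] at hk
        exact Bool.false_ne_true hk.symm
      have hright := (hQ k).resolve_left hcond
      have := hright _ hder hWk
      rw [hins] at this
      exact this hsH

lemma nashWilliams : ∀ {α G Y}, IsUnifOmega α G Y →
    ∀ X, X ⊆ Y → X.Infinite → ∀ H : Set (Finset ℕ), ∃ X', X' ⊆ X ∧ X'.Infinite ∧
      ((∀ s ∈ G, (↑s : Set ℕ) ⊆ X' → s ∈ H) ∨ (∀ s ∈ G, (↑s : Set ℕ) ⊆ X' → s ∉ H)) := by
  intro α G Y h
  induction h with
  | zero Y =>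
      intro X hXY hX H
      by_cases hem : ∅ ∈ H
      · exact ⟨X, subset_rfl, hX, Or.inl (by rintro s hs _; rw [Set.mem_singleton_iff] at hs; subst hs; exact hem)⟩
      · exact ⟨X, subset_rfl, hX, Or.inr (by rintro s hs _; rw [Set.mem_singleton_iff] at hs; subst hs; exact hem)⟩
  | succ β G Y h0 h ih => exact nw_core h0 ih
  | limit α G Y hα h0 f hf hsup h ih => exact nw_core h0 ih


lemma ltfusion {R : Type*} {G₁ G₂ : Set (Finset ℕ)} {Y : Set ℕ} (hY : Y.Infinite)
    {α₂ : Ordinal} (h₂ : IsUnifOmega α₂ G₂ Y)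
    (φ₁ φ₂ : Finset ℕ → R) (hφ₁ : Set.InjOn φ₁ G₁)
    (hclass : ∀ A ∈ G₁, ∀ B ∈ G₂, (↑A : Set ℕ) ⊆ Y → (↑B : Set ℕ) ⊆ Y → φ₁ A = φ₂ B →
      ∃ hA : A.Nonempty, ∀ b ∈ B, A.min' hA < b) :
    ∃ X, X ⊆ Y ∧ X.Infinite ∧
      ∀ A ∈ G₁, (↑A : Set ℕ) ⊆ X → ∀ B ∈ G₂, (↑B : Set ℕ) ⊆ X → φ₁ A ≠ φ₂ B := by
  classical
  set Hn : ℕ → Set (Finset ℕ) := fun n => {B | ∃ A ∈ G₁, φ₁ A = φ₂ B ∧ n ∈ A} with hHn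
  set Q : ℕ → Set ℕ → Prop := fun n Z' =>
    (∀ B ∈ G₂, (↑B : Set ℕ) ⊆ Z' → B ∈ Hn n) ∨
    (∀ B ∈ G₂, (↑B : Set ℕ) ⊆ Z' → B ∉ Hn n) with hQdef
  have hstep : ∀ n ∈ Y, ∀ Z, Z.Infinite → Z ⊆ {m ∈ Y | n < m} →
      ∃ Z', Z' ⊆ Z ∧ Z'.Infinite ∧ Q n Z' := by
    intro n hn Z hZinf hZsub
    exact nashWilliams h₂ Z (fun m hm => (hZsub hm).1) hZinf (Hn n)
  obtain ⟨x, W, hxmono, hxY, hQ, hWsub, hcross⟩ := fusion Y hY Q hstep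
  by_cases hex : ∃ k, ∀ B ∈ G₂, (↑B : Set ℕ) ⊆ W k → B ∈ Hn (x k)
  · obtain ⟨k, hk⟩ := hex
    refine ⟨W k, fun m hm => (hWsub k hm).1, ?_, ?_⟩
    · -- W k infinite : from fusion? we didn't export. derive: it contains x j for all j > k
      apply Set.infinite_of_injective_forall_mem (f := fun i : ℕ => x (k + 1 + i))
      · intro a b hab
        have := hxmono.injective hab
        omega
      · intro i
        exact hcross k (k + 1 + i) (by omega)
    · intro A hA hAX B hB hBX hv
      obtain ⟨A', hA', hv', hnA'⟩ := hk B hB hBX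
      have : A' = A := hφ₁ hA' hA (hv'.trans hv.symm)
      subst this
      have := hAX (by exact_mod_cast hnA')
      exact lt_irrefl (x k) (hWsub k this).2
  · push_neg at hex
    refine ⟨Set.range x, ?_, ?_, ?_⟩
    · rintro _ ⟨k, rfl⟩; exact hxY k
    · exact Set.infinite_range_of_injective hxmono.injective
    · intro A hA hAX B hB hBX hv
      obtain ⟨hAne, hmin⟩ := hclass A hA B hB
        (hAX.trans (by rintro _ ⟨k, rfl⟩; exact hxY k))
        (hBX.trans (by rintro _ ⟨k, rfl⟩; exact hxY k)) hv
      obtain ⟨k, hxk⟩ := hAX (by exact_mod_cast A.min'_mem hAne)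
      have hBW : (↑B : Set ℕ) ⊆ W k := by
        refine image_subset_W hxmono hcross (K := Set.univ) ?_ ?_
        · intro b hb
          obtain ⟨j, hj⟩ := hBX hb
          exact ⟨j, trivial, hj⟩
        · intro b hb; rw [hxk]; exact hmin b hb
      obtain ⟨B₀, hB₀, hB₀W, hB₀n⟩ := hex k
      have hnotleft : ¬ (∀ B ∈ G₂, (↑B : Set ℕ) ⊆ W k → B ∈ Hn (x k)) :=
        fun hl => hB₀n (hl B₀ hB₀ hB₀W)
      have hright := (hQ k).resolve_left hnotleft
      exact hright B hB hBW ⟨A, hA, hv, by rw [hxk]; exact A.min'_mem hAne⟩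


lemma main {R : Type*} (α₁ : Ordinal) : ∀ (α₂ : Ordinal) (G₁ G₂ : Set (Finset ℕ)) (Y : Set ℕ),
    Y.Infinite → IsUnifOmega α₁ G₁ Y → IsUnifOmega α₂ G₂ Y →
    ∀ (φ₁ φ₂ : Finset ℕ → R), Set.InjOn φ₁ G₁ → Set.InjOn φ₂ G₂ →
    ∃ X, X ⊆ Y ∧ X.Infinite ∧
      (((∀ s ∈ G₁, (↑s : Set ℕ) ⊆ X → s ∈ G₂) ∧ (∀ s ∈ G₂, (↑s : Set ℕ) ⊆ X → s ∈ G₁) ∧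
         ∀ A ∈ G₁, (↑A : Set ℕ) ⊆ X → φ₁ A = φ₂ A) ∨
       (∀ A ∈ G₁, (↑A : Set ℕ) ⊆ X → ∀ B ∈ G₂, (↑B : Set ℕ) ⊆ X → φ₁ A ≠ φ₂ B)) := by
  induction α₁ using Ordinal.induction with
  | h α₁ IH =>
  intro α₂ G₁ G₂ Y hY h₁ h₂ φ₁ φ₂ hφ₁ hφ₂
  classical
  by_cases hz1 : α₁ = 0
  · subst hz1
    have hG1 : G₁ = {∅} := zero_inv h₁
    subst hG1
    by_cases hz2 : α₂ = 0
    · subst hz2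
      have hG2 : G₂ = {∅} := zero_inv h₂
      subst hG2
      by_cases heq : φ₁ ∅ = φ₂ ∅
      · refine ⟨Y, subset_rfl, hY, Or.inl ⟨fun s hs _ => hs, fun s hs _ => hs, ?_⟩⟩
        intro A hA _
        rw [Set.mem_singleton_iff] at hA; subst hA; exact heq
      · refine ⟨Y, subset_rfl, hY, Or.inr ?_⟩
        intro A hA _ B hB _
        rw [Set.mem_singleton_iff] at hA hB; subst hA; subst hB; exact heq
    · have h02 : ∅ ∉ G₂ := (pos_inv h₂ hz2).1
      by_cases hB : ∃ B ∈ G₂, φ₂ B = φ₁ ∅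
      · obtain ⟨B₀, hB₀, hveq⟩ := hB
        have hB₀ne : B₀.Nonempty := by
          rcases Finset.eq_empty_or_nonempty B₀ with rfl | h
          · exact absurd hB₀ h02
          · exact h
        obtain ⟨m, hm⟩ := hB₀ne
        refine ⟨Y \ {m}, Set.diff_subset, hY.diff (Set.finite_singleton m), Or.inr ?_⟩
        intro A hA _ B hBG hBX hv
        rw [Set.mem_singleton_iff] at hA; subst hA
        have : B = B₀ := hφ₂ hBG hB₀ (hv.symm.trans hveq.symm)
        subst this
        exact (hBX (by exact_mod_cast hm)).2 rfl
      · refine ⟨Y, subset_rfl, hY, Or.inr ?_⟩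
        intro A hA _ B hBG _ hv
        rw [Set.mem_singleton_iff] at hA; subst hA
        exact hB ⟨B, hBG, hv.symm⟩
  · by_cases hz2 : α₂ = 0
    · subst hz2
      have hG2 : G₂ = {∅} := zero_inv h₂
      subst hG2
      have h01 : ∅ ∉ G₁ := (pos_inv h₁ hz1).1
      by_cases hA : ∃ A ∈ G₁, φ₁ A = φ₂ ∅
      · obtain ⟨A₀, hA₀, hveq⟩ := hA
        have hA₀ne : A₀.Nonempty := by
          rcases Finset.eq_empty_or_nonempty A₀ with rfl | h
          · exact absurd hA₀ h01
          · exact h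
        obtain ⟨m, hm⟩ := hA₀ne
        refine ⟨Y \ {m}, Set.diff_subset, hY.diff (Set.finite_singleton m), Or.inr ?_⟩
        intro A hAG hAX B hBG _ hv
        rw [Set.mem_singleton_iff] at hBG; subst hBG
        have : A = A₀ := hφ₁ hAG hA₀ (hv.trans hveq.symm)
        subst this
        exact (hAX (by exact_mod_cast hm)).2 rfl
      · refine ⟨Y, subset_rfl, hY, Or.inr ?_⟩
        intro A hAG _ B hBG _ hv
        rw [Set.mem_singleton_iff] at hBG; subst hBG
        exact hA ⟨A, hAG, hv⟩
    · -- both ranks nonzero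
      obtain ⟨h01, hder₁⟩ := pos_inv h₁ hz1
      obtain ⟨h02, hder₂⟩ := pos_inv h₂ hz2
      set Hlt : Set (Finset ℕ) :=
        {B | ∃ A ∈ G₁, φ₁ A = φ₂ B ∧ ∃ hA : A.Nonempty, ∀ b ∈ B, A.min' hA < b} with hHlt
      obtain ⟨Y₁, hY₁sub, hY₁inf, hc1⟩ := nashWilliams h₂ Y subset_rfl hY Hlt
      rcases hc1 with hlt | hnlt
      · -- all B in G₂↾Y₁ have a partner with smaller min: ltfusion
        have hclass : ∀ A ∈ G₁, ∀ B ∈ G₂, (↑A : Set ℕ) ⊆ Y₁ → (↑B : Set ℕ) ⊆ Y₁ →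
            φ₁ A = φ₂ B → ∃ hA : A.Nonempty, ∀ b ∈ B, A.min' hA < b := by
          intro A hA B hBG hAY hBY hv
          obtain ⟨A', hA', hv', hne, hmin⟩ := hlt B hBG hBY
          have : A' = A := hφ₁ hA' hA (hv'.trans hv.symm)
          subst this
          exact ⟨hne, hmin⟩
        obtain ⟨X, hXsub, hXinf, hp⟩ :=
          ltfusion hY₁inf (unif_mono h₂ Y₁ hY₁sub) φ₁ φ₂ hφ₁ hclass
        exact ⟨X, hXsub.trans hY₁sub, hXinf, Or.inr hp⟩
      · set Hgt : Set (Finset ℕ) :=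
          {B | ∀ A ∈ G₁, φ₁ A = φ₂ B → ∃ hB : B.Nonempty, ∀ a ∈ A, B.min' hB < a} with hHgt
        obtain ⟨Y₂, hY₂sub, hY₂inf, hc2⟩ := nashWilliams h₂ Y₁ hY₁sub hY₁inf Hgt
        rcases hc2 with hgt | hngt
        · have hclass : ∀ B ∈ G₂, ∀ A ∈ G₁, (↑B : Set ℕ) ⊆ Y₂ → (↑A : Set ℕ) ⊆ Y₂ →
              φ₂ B = φ₁ A → ∃ hB : B.Nonempty, ∀ a ∈ A, B.min' hB < a := by
            intro B hBG A hA hBY hAY hv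
            exact hgt B hBG hBY A hA hv.symm
          obtain ⟨X, hXsub, hXinf, hp⟩ :=
            ltfusion hY₂inf (unif_mono h₁ Y₂ (hY₂sub.trans hY₁sub)) φ₂ φ₁ hφ₂ hclass
          refine ⟨X, hXsub.trans (hY₂sub.trans hY₁sub), hXinf, Or.inr ?_⟩
          intro A hA hAX B hBG hBX hv
          exact hp B hBG hBX A hA hAX hv.symm
        · -- equal minima established
          have Peq : ∀ B ∈ G₂, (↑B : Set ℕ) ⊆ Y₂ → ∀ A ∈ G₁, φ₁ A = φ₂ B →
              ∃ (hA : A.Nonempty) (hB : B.Nonempty), A.min' hA = B.min' hB := by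
            intro B hBG hBY A hA hv
            have hBne : B.Nonempty := by
              rcases Finset.eq_empty_or_nonempty B with rfl | h
              · exact absurd hBG h02
              · exact h
            have h2' := hngt B hBG hBY
            rw [hHgt, Set.mem_setOf_eq] at h2'
            push_neg at h2'
            obtain ⟨A₀, hA₀, hv₀, hmin₀⟩ := h2'
            have hAeq : A₀ = A := hφ₁ hA₀ hA (hv₀.trans hv.symm)
            subst hAeq
            obtain ⟨a, haA, hale⟩ := hmin₀ hBne
            have hAne : A₀.Nonempty := ⟨a, haA⟩
            have h1' := hnlt B hBG (hBY.trans hY₂sub)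
            rw [hHlt, Set.mem_setOf_eq] at h1'
            push_neg at h1'
            obtain ⟨b, hbB, hble⟩ := h1' A₀ hA₀ hv hAne
            refine ⟨hAne, hBne, le_antisymm ?_ ?_⟩
            · exact le_trans (A₀.min'_le a haA) hale
            · exact le_trans (B.min'_le b hbB) hble
          -- Stage 3: fusion with the rank induction hypothesis at each point
          set Q : ℕ → Set ℕ → Prop := fun n Z' =>
            ((∀ s ∈ derFam G₁ n, (↑s : Set ℕ) ⊆ Z' → s ∈ derFam G₂ n) ∧
             (∀ s ∈ derFam G₂ n, (↑s : Set ℕ) ⊆ Z' → s ∈ derFam G₁ n) ∧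
             ∀ s ∈ derFam G₁ n, (↑s : Set ℕ) ⊆ Z' → φ₁ (insert n s) = φ₂ (insert n s)) ∨
            (∀ A ∈ derFam G₁ n, (↑A : Set ℕ) ⊆ Z' → ∀ B ∈ derFam G₂ n, (↑B : Set ℕ) ⊆ Z' →
              φ₁ (insert n A) ≠ φ₂ (insert n B)) with hQdef
          have hstep : ∀ n ∈ Y₂, ∀ Z, Z.Infinite → Z ⊆ {m ∈ Y₂ | n < m} →
              ∃ Z', Z' ⊆ Z ∧ Z'.Infinite ∧ Q n Z' := by
            intro n hn Z hZinf hZsub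
            have hnY : n ∈ Y := hY₁sub (hY₂sub hn)
            obtain ⟨β₁, hβ₁lt, hu₁⟩ := hder₁ n hnY
            obtain ⟨β₂, hβ₂lt, hu₂⟩ := hder₂ n hnY
            have hZY : Z ⊆ {m ∈ Y | n < m} := fun m hm =>
              ⟨hY₁sub (hY₂sub (hZsub hm).1), (hZsub hm).2⟩
            have hinj₁ : Set.InjOn (fun s => φ₁ (insert n s)) (derFam G₁ n) := by
              intro A hA A' hA' hv
              have heq := hφ₁ hA.1 hA'.1 hv
              have hnA : n ∉ A := fun hmem => lt_irrefl n (hA.2 n hmem)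
              have hnA' : n ∉ A' := fun hmem => lt_irrefl n (hA'.2 n hmem)
              rw [← Finset.erase_insert hnA, ← Finset.erase_insert hnA', heq]
            have hinj₂ : Set.InjOn (fun s => φ₂ (insert n s)) (derFam G₂ n) := by
              intro A hA A' hA' hv
              have heq := hφ₂ hA.1 hA'.1 hv
              have hnA : n ∉ A := fun hmem => lt_irrefl n (hA.2 n hmem)
              have hnA' : n ∉ A' := fun hmem => lt_irrefl n (hA'.2 n hmem)
              rw [← Finset.erase_insert hnA, ← Finset.erase_insert hnA', heq]
            obtain ⟨Z', hZ'Z, hZ'inf, hdich⟩ := IH β₁ hβ₁lt β₂ (derFam G₁ n) (derFam G₂ n) Z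
              hZinf (unif_mono hu₁ Z hZY) (unif_mono hu₂ Z hZY) _ _ hinj₁ hinj₂
            exact ⟨Z', hZ'Z, hZ'inf, hdich⟩
          obtain ⟨x, W, hxmono, hxY₂, hQs, hWsub, hcross⟩ := fusion Y₂ hY₂inf Q hstep
          let d : ℕ → Bool := fun k =>
            if ((∀ s ∈ derFam G₁ (x k), (↑s : Set ℕ) ⊆ W k → s ∈ derFam G₂ (x k)) ∧
                (∀ s ∈ derFam G₂ (x k), (↑s : Set ℕ) ⊆ W k → s ∈ derFam G₁ (x k)) ∧
                ∀ s ∈ derFam G₁ (x k), (↑s : Set ℕ) ⊆ W k →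
                  φ₁ (insert (x k) s) = φ₂ (insert (x k) s)) then true else false
          obtain ⟨b, hK⟩ := bool_pigeon d
          have hXY₂ : x '' {k | d k = b} ⊆ Y₂ := by rintro _ ⟨k, _, rfl⟩; exact hxY₂ k
          have hXsub : x '' {k | d k = b} ⊆ Y := hXY₂.trans (hY₂sub.trans hY₁sub)
          have hXinf : (x '' {k | d k = b}).Infinite :=
            hK.image (Function.Injective.injOn hxmono.injective)
          have hdec : ∀ (G : Set (Finset ℕ)) (s : Finset ℕ), s ∈ G →
              ∀ hne : s.Nonempty, (↑s : Set ℕ) ⊆ x '' {k | d k = b} →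
              ∃ k, d k = b ∧ s.erase (x k) ∈ derFam G (x k) ∧
                (↑(s.erase (x k)) : Set ℕ) ⊆ W k ∧ insert (x k) (s.erase (x k)) = s ∧
                x k = s.min' hne := by
            intro G s hs hne hsX
            obtain ⟨k, hk, hxk⟩ := hsX (by exact_mod_cast s.min'_mem hne)
            refine ⟨k, hk, ?_, ?_, ?_, hxk⟩
            · rw [hxk]; exact erase_min_mem_derFam hs hne
            · refine image_subset_W hxmono hcross
                (fun a ha => hsX (by exact_mod_cast Finset.mem_of_mem_erase ha)) ?_
              intro a ha
              rw [hxk]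
              exact lt_of_le_of_ne (s.min'_le a (Finset.mem_of_mem_erase ha))
                (Ne.symm (by rw [← hxk]; exact Finset.ne_of_mem_erase ha))
            · rw [hxk]; exact Finset.insert_erase (s.min'_mem hne)
          cases b with
          | true =>
              have hleft : ∀ k, d k = true →
                  ((∀ s ∈ derFam G₁ (x k), (↑s : Set ℕ) ⊆ W k → s ∈ derFam G₂ (x k)) ∧
                   (∀ s ∈ derFam G₂ (x k), (↑s : Set ℕ) ⊆ W k → s ∈ derFam G₁ (x k)) ∧
                   ∀ s ∈ derFam G₁ (x k), (↑s : Set ℕ) ⊆ W k →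
                     φ₁ (insert (x k) s) = φ₂ (insert (x k) s)) := by
                intro k hk
                by_contra hc
                simp only [d, if_neg hc] at hk
                exact Bool.false_ne_true hk
              refine ⟨x '' {k | d k = true}, hXsub, hXinf, Or.inl ⟨?_, ?_, ?_⟩⟩
              · intro s hs hsX
                have hne : s.Nonempty := by
                  rcases Finset.eq_empty_or_nonempty s with rfl | h
                  · exact absurd hs h01
                  · exact h
                obtain ⟨k, hk, hder, hW, hins, _⟩ := hdec G₁ s hs hne hsX
                have := ((hleft k hk).1 _ hder hW).1
                rwa [hins] at this
              · intro s hs hsX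
                have hne : s.Nonempty := by
                  rcases Finset.eq_empty_or_nonempty s with rfl | h
                  · exact absurd hs h02
                  · exact h
                obtain ⟨k, hk, hder, hW, hins, _⟩ := hdec G₂ s hs hne hsX
                have := ((hleft k hk).2.1 _ hder hW).1
                rwa [hins] at this
              · intro A hA hAX
                have hne : A.Nonempty := by
                  rcases Finset.eq_empty_or_nonempty A with rfl | h
                  · exact absurd hA h01
                  · exact h
                obtain ⟨k, hk, hder, hW, hins, _⟩ := hdec G₁ A hA hne hAX
                have := (hleft k hk).2.2 _ hder hW
                rwa [hins] at this
          | false =>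
              have hnotleft : ∀ k, d k = false →
                  ¬ ((∀ s ∈ derFam G₁ (x k), (↑s : Set ℕ) ⊆ W k → s ∈ derFam G₂ (x k)) ∧
                     (∀ s ∈ derFam G₂ (x k), (↑s : Set ℕ) ⊆ W k → s ∈ derFam G₁ (x k)) ∧
                     ∀ s ∈ derFam G₁ (x k), (↑s : Set ℕ) ⊆ W k →
                       φ₁ (insert (x k) s) = φ₂ (insert (x k) s)) := by
                intro k hk hc
                simp only [d, if_pos hc] at hk
                exact Bool.false_ne_true hk.symm
              refine ⟨x '' {k | d k = false}, hXsub, hXinf, Or.inr ?_⟩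
              intro A hA hAX B hBG hBX hv
              obtain ⟨hAne, hBne, hmineq⟩ := Peq B hBG (hBX.trans hXY₂) A hA hv
              obtain ⟨k, hk, hAder, hAW, hAins, hxk⟩ := hdec G₁ A hA hAne hAX
              have hxkB : x k = B.min' hBne := hxk.trans hmineq
              have hBder : B.erase (x k) ∈ derFam G₂ (x k) := by
                rw [hxkB]; exact erase_min_mem_derFam hBG hBne
              have hBW : (↑(B.erase (x k)) : Set ℕ) ⊆ W k := by
                refine image_subset_W hxmono hcross
                  (fun a ha => hBX (by exact_mod_cast Finset.mem_of_mem_erase ha)) ?_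
                intro a ha
                rw [hxkB]
                exact lt_of_le_of_ne (B.min'_le a (Finset.mem_of_mem_erase ha))
                  (Ne.symm (by rw [← hxkB]; exact Finset.ne_of_mem_erase ha))
              have hBins : insert (x k) (B.erase (x k)) = B := by
                rw [hxkB]; exact Finset.insert_erase (B.min'_mem hBne)
              have hright := (hQs k).resolve_left (hnotleft k hk)
              have := hright _ hAder hAW _ hBder hBW
              rw [hAins, hBins] at this
              exact this hv

end PRaux

/-- Pudlák–Rödl disjointification lemma. -/
theorem pudlak_rodl_disjointification {R : Type*} (Y : Set ℕ) (hY : Y.Infinite)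
    (G₁ G₂ : Set (Finset ℕ)) (α₁ α₂ : Ordinal)
    (hα₁ : α₁.card ≤ Cardinal.aleph0) (hα₂ : α₂.card ≤ Cardinal.aleph0)
    (h₁ : IsUnifOmega α₁ G₁ Y) (h₂ : IsUnifOmega α₂ G₂ Y)
    (φ₁ φ₂ : Finset ℕ → R) (hφ₁ : Set.InjOn φ₁ G₁) (hφ₂ : Set.InjOn φ₂ G₂) :
    ∃ X : Set ℕ, X ⊆ Y ∧ X.Infinite ∧
      (({s ∈ G₁ | (↑s : Set ℕ) ⊆ X} = {s ∈ G₂ | (↑s : Set ℕ) ⊆ X} ∧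
          ∀ A ∈ G₁, (↑A : Set ℕ) ⊆ X → φ₁ A = φ₂ A) ∨
        (φ₁ '' {s ∈ G₁ | (↑s : Set ℕ) ⊆ X} ∩ φ₂ '' {s ∈ G₂ | (↑s : Set ℕ) ⊆ X} = ∅)) := by
  obtain ⟨X, hXsub, hXinf, hd⟩ := PRaux.main α₁ α₂ G₁ G₂ Y hY h₁ h₂ φ₁ φ₂ hφ₁ hφ₂
  refine ⟨X, hXsub, hXinf, ?_⟩
  rcases hd with ⟨h12, h21, hag⟩ | hp
  · left
    refine ⟨?_, hag⟩
    ext s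
    constructor
    · rintro ⟨hs, hsX⟩
      exact ⟨h12 s hs hsX, hsX⟩
    · rintro ⟨hs, hsX⟩
      exact ⟨h21 s hs hsX, hsX⟩
  · right
    rw [Set.eq_empty_iff_forall_notMem]
    rintro v ⟨⟨A, ⟨hA, hAX⟩, rfl⟩, B, ⟨hB, hBX⟩, hv⟩
    exact hp A hA hAX B hB hBX hv.symm
end
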